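/- arXiv:2601.19058 — 2 statements merged into one kernel-verified Lean document; each statement's English description precedes it below -/
import Mathlib

section
/- Let μ = Φ_* ν be the pushforward to Z = {α,β}^ℤ of the Bernoulli(1/2,1/2) measure ν under Φ. Then μ is a σ-invariant ergodic measure with μ(Y) = 1, the measure-theoretic entropy h_μ(σ) = 0, and 5/32 ≤ μ([β]) ≤ 6/32 where [β] = {z : z_0 = β}. -/
open MeasureTheory Filter Topology
open scoped ENNReal

/-- The odometer map on `X = {0,1}^ℕ` (adding one with carry in binary). -/
def Tod (x : ℕ → Bool) : ℕ → Bool := fun k =>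
  if ∀ i < k, x i = true then !(x k) else x k

/-- The inverse of the odometer map (subtracting one with borrow). -/
def TodInv (x : ℕ → Bool) : ℕ → Bool := fun k =>
  if ∀ i < k, x i = false then !(x k) else x k

/-- The number determined by the first `k` binary digits of `x`. -/
def DN (k : ℕ) (x : ℕ → Bool) : ℕ := ∑ i ∈ Finset.range k, 2 ^ i * (x i).toNat

/-- The cylinder `[0^i]` of sequences starting with `i` zeros. -/
def cyl0 (i : ℕ) : Set (ℕ → Bool) := {x | ∀ j < i, x j = false}

/-- `A = ⋃_{i=5}^∞ ⋃_{j=0}^{i-1} T^j([0^i])`. -/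
def Aset : Set (ℕ → Bool) := ⋃ (i : ℕ) (_ : 5 ≤ i) (j : ℕ) (_ : j < i), Tod^[j] '' cyl0 i

/-- `A_k = ⋃_{i=5}^{k} ⋃_{j=0}^{i-1} T^j([0^i])`. -/
def Ak (k : ℕ) : Set (ℕ → Bool) :=
  ⋃ (i : ℕ) (_ : 5 ≤ i) (_ : i ≤ k) (j : ℕ) (_ : j < i), Tod^[j] '' cyl0 i

/-- `E_k = ⋃_{i=k+1}^∞ ⋃_{j=0}^{i-1} T^j([0^i])`. -/
def Ek (k : ℕ) : Set (ℕ → Bool) :=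
  ⋃ (i : ℕ) (_ : k + 1 ≤ i) (j : ℕ) (_ : j < i), Tod^[j] '' cyl0 i

/-- `T^n` for `n : ℤ` (using the inverse odometer for negative `n`). -/
def zIter (n : ℤ) (x : ℕ → Bool) : ℕ → Bool :=
  if 0 ≤ n then Tod^[n.toNat] x else TodInv^[(-n).toNat] x

/-- The factor map `Φ : X → Z = {α,β}^ℤ`, with `β = true`, `α = false`:
`Φ(x)_n = β` iff `T^n(x) ∈ A`. -/
noncomputable def Phi (x : ℕ → Bool) : ℤ → Bool := fun n =>
  @decide (zIter n x ∈ Aset) (Classical.propDecidable _)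

/-- The subshift `Y`, the closure of `Φ(X)` in the full two-sided shift. -/
def Ysub : Set (ℤ → Bool) := closure (Set.range Phi)

/-- The shift map on `Z = {α,β}^ℤ`. -/
def shiftZ (z : ℤ → Bool) : ℤ → Bool := fun n => z (n + 1)

/-- The cylinder in `Z` given by a word `w` of length `n` placed at positions `0,…,n-1`. -/
def cylZ (n : ℕ) (w : Fin n → Bool) : Set (ℤ → Bool) :=
  {z | ∀ i : Fin n, z ((i : ℕ) : ℤ) = w i}
-- Part 1 : basic combinatorics of Tod, TodInv, DN

lemma tod_prefix_iff (x : ℕ → Bool) (k : ℕ) :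
    (∀ i < k, Tod x i = false) ↔ (∀ i < k, x i = true) := by
  induction k with
  | zero => simp
  | succ k ih =>
    constructor
    · intro h
      have hk : ∀ i < k, x i = true := ih.1 fun i hi => h i (hi.trans (Nat.lt_succ_self _))
      intro i hi
      rcases Nat.lt_succ_iff_lt_or_eq.1 hi with hi | rfl
      · exact hk i hi
      · have hh := h i (Nat.lt_succ_self _)
        unfold Tod at hh
        rw [if_pos hk] at hh
        simpa using hh
    · intro h i hi
      have hk : ∀ j < i, x j = true := fun j hj => h j (hj.trans hi)
      unfold Tod
      rw [if_pos hk]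
      simp [h i hi]

lemma todInv_prefix_iff (x : ℕ → Bool) (k : ℕ) :
    (∀ i < k, TodInv x i = true) ↔ (∀ i < k, x i = false) := by
  induction k with
  | zero => simp
  | succ k ih =>
    constructor
    · intro h
      have hk : ∀ i < k, x i = false := ih.1 fun i hi => h i (hi.trans (Nat.lt_succ_self _))
      intro i hi
      rcases Nat.lt_succ_iff_lt_or_eq.1 hi with hi | rfl
      · exact hk i hi
      · have hh := h i (Nat.lt_succ_self _)
        unfold TodInv at hh
        rw [if_pos hk] at hh
        simpa using hh
    · intro h i hi
      have hk : ∀ j < i, x j = false := fun j hj => h j (hj.trans hi)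
      unfold TodInv
      rw [if_pos hk]
      simp [h i hi]

lemma TodInv_Tod (x : ℕ → Bool) : TodInv (Tod x) = x := by
  funext k
  by_cases h : ∀ i < k, x i = true
  · have h1 : ∀ i < k, Tod x i = false := (tod_prefix_iff x k).2 h
    have h2 : Tod x k = !(x k) := by unfold Tod; rw [if_pos h]
    show TodInv (Tod x) k = x k
    unfold TodInv
    rw [if_pos h1, h2, Bool.not_not]
  · have h1 : ¬ ∀ i < k, Tod x i = false := fun hc => h ((tod_prefix_iff x k).1 hc)
    have h2 : Tod x k = x k := by unfold Tod; rw [if_neg h]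
    show TodInv (Tod x) k = x k
    unfold TodInv
    rw [if_neg h1, h2]

lemma Tod_TodInv (x : ℕ → Bool) : Tod (TodInv x) = x := by
  funext k
  by_cases h : ∀ i < k, x i = false
  · have h1 : ∀ i < k, TodInv x i = true := (todInv_prefix_iff x k).2 h
    have h2 : TodInv x k = !(x k) := by unfold TodInv; rw [if_pos h]
    show Tod (TodInv x) k = x k
    unfold Tod
    rw [if_pos h1, h2, Bool.not_not]
  · have h1 : ¬ ∀ i < k, TodInv x i = true := fun hc => h ((todInv_prefix_iff x k).1 hc)
    have h2 : TodInv x k = x k := by unfold TodInv; rw [if_neg h]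
    show Tod (TodInv x) k = x k
    unfold Tod
    rw [if_neg h1, h2]

lemma Tod_leftInv : Function.LeftInverse TodInv Tod := TodInv_Tod
lemma Tod_rightInv : Function.RightInverse TodInv Tod := Tod_TodInv

lemma Tod_iter_todInv_iter (j : ℕ) (x : ℕ → Bool) : Tod^[j] (TodInv^[j] x) = x :=
  (Tod_rightInv.iterate j) x

lemma todInv_iter_tod_iter (j : ℕ) (x : ℕ → Bool) : TodInv^[j] (Tod^[j] x) = x :=
  (Tod_leftInv.iterate j) x

lemma Tod_congr {x y : ℕ → Bool} {n : ℕ} (h : ∀ i < n, x i = y i) :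
    ∀ i < n, Tod x i = Tod y i := by
  intro i hi
  unfold Tod
  have hc : (∀ j < i, x j = true) ↔ (∀ j < i, y j = true) := by
    constructor <;> intro hh j hj
    · rw [← h j (hj.trans hi)]; exact hh j hj
    · rw [h j (hj.trans hi)]; exact hh j hj
  by_cases hx : ∀ j < i, x j = true
  · rw [if_pos hx, if_pos (hc.1 hx), h i hi]
  · rw [if_neg hx, if_neg (fun hy => hx (hc.2 hy)), h i hi]

lemma TodInv_congr {x y : ℕ → Bool} {n : ℕ} (h : ∀ i < n, x i = y i) :
    ∀ i < n, TodInv x i = TodInv y i := by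
  intro i hi
  unfold TodInv
  have hc : (∀ j < i, x j = false) ↔ (∀ j < i, y j = false) := by
    constructor <;> intro hh j hj
    · rw [← h j (hj.trans hi)]; exact hh j hj
    · rw [h j (hj.trans hi)]; exact hh j hj
  by_cases hx : ∀ j < i, x j = false
  · rw [if_pos hx, if_pos (hc.1 hx), h i hi]
  · rw [if_neg hx, if_neg (fun hy => hx (hc.2 hy)), h i hi]

-- DN basics

lemma DN_succ (n : ℕ) (x : ℕ → Bool) :
    DN (n + 1) x = DN n x + 2 ^ n * (x n).toNat := Finset.sum_range_succ _ _

lemma DN_lt (n : ℕ) (x : ℕ → Bool) : DN n x < 2 ^ n := by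
  induction n with
  | zero => simp [DN]
  | succ n ih =>
    rw [DN_succ]
    have : (x n).toNat ≤ 1 := by cases x n <;> simp
    have h2 : 2 ^ n * (x n).toNat ≤ 2 ^ n := by
      calc 2 ^ n * (x n).toNat ≤ 2 ^ n * 1 := Nat.mul_le_mul_left _ this
        _ = 2 ^ n := by ring
    have : DN n x + 2 ^ n * (x n).toNat < 2 ^ n + 2 ^ n := by omega
    calc DN n x + 2 ^ n * (x n).toNat < 2 ^ n + 2 ^ n := this
      _ = 2 ^ (n + 1) := by ring

lemma DN_congr {x y : ℕ → Bool} {n : ℕ} (h : ∀ i < n, x i = y i) : DN n x = DN n y := by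
  unfold DN
  exact Finset.sum_congr rfl fun i hi => by rw [h i (Finset.mem_range.1 hi)]

lemma DN_mod {i K : ℕ} (h : i ≤ K) (x : ℕ → Bool) : DN i x = DN K x % 2 ^ i := by
  induction K with
  | zero =>
    have : i = 0 := Nat.le_zero.1 h
    subst this; simp [DN]
  | succ K ih =>
    rcases Nat.lt_succ_iff_lt_or_eq.1 (Nat.lt_succ_of_le h) with h' | rfl
    · have hiK : i ≤ K := by omega
      rw [ih hiK, DN_succ]
      obtain ⟨c, hc⟩ := Dvd.dvd.mul_right (pow_dvd_pow 2 hiK) ((x K).toNat)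
      rw [hc, Nat.add_mul_mod_self_left]
    · exact (Nat.mod_eq_of_lt (DN_lt _ _)).symm

lemma DN_eq_zero_iff (n : ℕ) (x : ℕ → Bool) : DN n x = 0 ↔ ∀ i < n, x i = false := by
  unfold DN
  rw [Finset.sum_eq_zero_iff]
  constructor
  · intro h i hi
    have h2 := h i (Finset.mem_range.2 hi)
    cases hx : x i
    · rfl
    · rw [hx] at h2; simp at h2
  · intro h i hi
    rw [h i (Finset.mem_range.1 hi)]; simp

lemma DN_allones {n : ℕ} {x : ℕ → Bool} (h : ∀ i < n, x i = true) : DN n x = 2 ^ n - 1 := by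
  induction n with
  | zero => simp [DN]
  | succ n ih =>
    rw [DN_succ, ih (fun i hi => h i (hi.trans (Nat.lt_succ_self _))), h n (Nat.lt_succ_self _)]
    simp [Bool.toNat]
    have : 1 ≤ 2 ^ n := Nat.one_le_two_pow
    omega
-- Part 2 : testBit, DN under Tod, Aset characterization

lemma DN_shift (n : ℕ) (x : ℕ → Bool) :
    DN (n + 1) x = (x 0).toNat + 2 * DN n (fun j => x (j + 1)) := by
  unfold DN
  rw [Finset.sum_range_succ']
  have h1 : ∀ i ∈ Finset.range n, 2 ^ (i + 1) * (x (i + 1)).toNat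
      = 2 * (2 ^ i * (x (i + 1)).toNat) := fun i _ => by ring
  rw [Finset.sum_congr rfl h1, ← Finset.mul_sum]
  simp only [pow_zero, one_mul]
  omega

lemma DN_testBit : ∀ (i n : ℕ) (x : ℕ → Bool), i < n → (DN n x).testBit i = x i := by
  intro i
  induction i with
  | zero =>
    intro n x hn
    obtain ⟨m, rfl⟩ : ∃ m, n = m + 1 := ⟨n - 1, by omega⟩
    rw [DN_shift, Nat.testBit_zero]
    cases hx : x 0 <;> simp [hx] <;> omega
  | succ i ih =>
    intro n x hn
    obtain ⟨m, rfl⟩ : ∃ m, n = m + 1 := ⟨n - 1, by omega⟩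
    rw [DN_shift, Nat.testBit_succ]
    have hdiv : ((x 0).toNat + 2 * DN m fun j => x (j + 1)) / 2 = DN m fun j => x (j + 1) := by
      cases x 0 <;> simp <;> omega
    rw [hdiv, ih m (fun j => x (j + 1)) (by omega)]

lemma DN_eq_iff {n m : ℕ} (hm : m < 2 ^ n) (x : ℕ → Bool) :
    DN n x = m ↔ ∀ i < n, x i = m.testBit i := by
  constructor
  · intro h i hi
    rw [← h, DN_testBit i n x hi]
  · intro h
    apply Nat.eq_of_testBit_eq
    intro j
    by_cases hj : j < n
    · rw [DN_testBit j n x hj, h j hj]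
    · have h1 : (DN n x).testBit j = false := Nat.testBit_lt_two_pow
        (lt_of_lt_of_le (DN_lt n x) (Nat.pow_le_pow_right (by norm_num) (by omega)))
      have h2 : m.testBit j = false := Nat.testBit_lt_two_pow
        (lt_of_lt_of_le hm (Nat.pow_le_pow_right (by norm_num) (by omega)))
      rw [h1, h2]

lemma DN_prefix_iff {n : ℕ} (x a : ℕ → Bool) :
    (∀ i < n, x i = a i) ↔ DN n x = DN n a := by
  constructor
  · exact DN_congr
  · intro h i hi
    have h1 := DN_testBit i n x hi
    have h2 := DN_testBit i n a hi
    rw [← h1, h, h2]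

lemma DN_Tod (n : ℕ) (x : ℕ → Bool) :
    DN n (Tod x) = if ∀ i < n, x i = true then 0 else DN n x + 1 := by
  induction n with
  | zero => simp [DN]
  | succ n ih =>
    rw [DN_succ, ih]
    by_cases h : ∀ i < n + 1, x i = true
    · have hn : ∀ i < n, x i = true := fun i hi => h i (hi.trans (Nat.lt_succ_self _))
      rw [if_pos hn, if_pos h]
      have : Tod x n = !(x n) := by unfold Tod; rw [if_pos hn]
      rw [this, h n (Nat.lt_succ_self _)]
      simp
    · rw [if_neg h]
      by_cases hn : ∀ i < n, x i = true
      · have hxn : x n = false := by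
          cases hx : x n
          · rfl
          · exfalso
            apply h
            intro i hi
            rcases Nat.lt_succ_iff_lt_or_eq.1 hi with hi' | rfl
            · exact hn i hi'
            · exact hx
        have hT : Tod x n = true := by unfold Tod; rw [if_pos hn, hxn]; rfl
        rw [if_pos hn, hT, DN_succ, hxn, DN_allones hn]
        have h1 : 1 ≤ 2 ^ n := Nat.one_le_two_pow
        simp only [Bool.toNat_true, Bool.toNat_false, mul_one, mul_zero, add_zero, zero_add]
        omega
      · have hT : Tod x n = x n := by unfold Tod; rw [if_neg hn]
        rw [if_neg hn, hT, DN_succ]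
        ring

lemma DN_allones_iff {n : ℕ} (x : ℕ → Bool) : DN n x = 2 ^ n - 1 ↔ ∀ i < n, x i = true := by
  constructor
  · intro h i hi
    have := DN_testBit i n x hi
    rw [h, Nat.testBit_two_pow_sub_one] at this
    rw [← this]
    simp [hi]
  · exact DN_allones

lemma DN_Tod_mod (n : ℕ) (x : ℕ → Bool) : DN n (Tod x) = (DN n x + 1) % 2 ^ n := by
  rw [DN_Tod]
  by_cases h : ∀ i < n, x i = true
  · rw [if_pos h, DN_allones h]
    have : 1 ≤ 2 ^ n := Nat.one_le_two_pow
    rw [Nat.sub_add_cancel this, Nat.mod_self]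
  · rw [if_neg h]
    have hne : DN n x ≠ 2 ^ n - 1 := fun hc => h ((DN_allones_iff x).1 hc)
    have := DN_lt n x
    rw [Nat.mod_eq_of_lt (by omega)]

lemma DN_Tod_iter (n k : ℕ) (x : ℕ → Bool) :
    DN n (Tod^[k] x) = (DN n x + k) % 2 ^ n := by
  induction k with
  | zero => simp [Nat.mod_eq_of_lt (DN_lt n x)]
  | succ k ih =>
    rw [Function.iterate_succ_apply', DN_Tod_mod, ih, Nat.mod_add_mod, Nat.add_assoc]

lemma mem_cyl0_iff (i : ℕ) (x : ℕ → Bool) : x ∈ cyl0 i ↔ DN i x = 0 :=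
  (DN_eq_zero_iff i x).symm

lemma mem_Aset_iff (x : ℕ → Bool) : x ∈ Aset ↔ ∃ i, 5 ≤ i ∧ DN i x < i := by
  constructor
  · intro hx
    simp only [Aset, Set.mem_iUnion] at hx
    obtain ⟨i, hi5, j, hji, y, hy, hxy⟩ := hx
    refine ⟨i, hi5, ?_⟩
    have hy0 : DN i y = 0 := (mem_cyl0_iff i y).1 hy
    have : DN i x = (DN i y + j) % 2 ^ i := by rw [← hxy, DN_Tod_iter]
    rw [hy0, zero_add, Nat.mod_eq_of_lt (lt_of_lt_of_le hji (le_of_lt (Nat.lt_two_pow_self (n := i))))] at this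
    omega
  · rintro ⟨i, hi5, hlt⟩
    simp only [Aset, Set.mem_iUnion]
    refine ⟨i, hi5, DN i x, hlt, TodInv^[DN i x] x, ?_, Tod_iter_todInv_iter _ _⟩
    rw [mem_cyl0_iff]
    have h1 : DN i x = (DN i (TodInv^[DN i x] x) + DN i x) % 2 ^ i := by
      conv_lhs => rw [← Tod_iter_todInv_iter (DN i x) x]
      rw [DN_Tod_iter]
    have h2 : (0 + DN i x) % 2 ^ i = DN i x := by
      rw [zero_add, Nat.mod_eq_of_lt (DN_lt i x)]
    have hmodeq : DN i (TodInv^[DN i x] x) ≡ 0 [MOD 2 ^ i] := by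
      have : (DN i (TodInv^[DN i x] x) + DN i x) % 2 ^ i = (0 + DN i x) % 2 ^ i := by
        rw [h2, ← h1]
      exact Nat.ModEq.add_right_cancel' (DN i x) this
    have := DN_lt i (TodInv^[DN i x] x)
    have h0 : DN i (TodInv^[DN i x] x) % 2 ^ i = 0 % 2 ^ i := hmodeq
    rw [Nat.mod_eq_of_lt ‹DN i (TodInv^[DN i x] x) < 2 ^ i›, Nat.zero_mod] at h0
    exact h0
-- Part 3 : measurability, π-system, measure preservation, ergodicity of Tod

/-- The collection of prefix cylinders in `X`. -/
def CylSet : Set (Set (ℕ → Bool)) :=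
  {S | ∃ (n : ℕ) (a : ℕ → Bool), S = {x | ∀ i < n, x i = a i}}

lemma cyl_measurableSet (n : ℕ) (a : ℕ → Bool) :
    MeasurableSet {x : ℕ → Bool | ∀ i < n, x i = a i} := by
  have : {x : ℕ → Bool | ∀ i < n, x i = a i} = ⋂ (i : ℕ) (_ : i < n), {x | x i = a i} := by
    ext x; simp
  rw [this]
  refine MeasurableSet.biInter (Set.to_countable _) fun i _ => ?_
  have h2 : {x : ℕ → Bool | x i = a i} = (fun f : ℕ → Bool => f i) ⁻¹' {a i} := rfl
  rw [h2]
  exact (measurable_pi_apply i) (measurableSet_singleton _)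

lemma generateFrom_CylSet :
    (inferInstance : MeasurableSpace (ℕ → Bool)) = MeasurableSpace.generateFrom CylSet := by
  apply le_antisymm
  · have key : ∀ (i : ℕ) (b : Bool), MeasurableSet[MeasurableSpace.generateFrom CylSet]
        {x : ℕ → Bool | x i = b} := by
      intro i b
      have heq : {x : ℕ → Bool | x i = b} =
          ⋃ (a : Fin (i + 1) → Bool) (_ : a ⟨i, Nat.lt_succ_self i⟩ = b),
            {x | ∀ j < i + 1, x j = (fun j => if h : j < i + 1 then a ⟨j, h⟩ else false) j} := by
        ext x
        simp only [Set.mem_setOf_eq, Set.mem_iUnion]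
        constructor
        · intro hx
          refine ⟨fun j => x j, by simpa using hx, fun j hj => ?_⟩
          rw [dif_pos hj]
        · rintro ⟨a, ha, hx⟩
          have := hx i (Nat.lt_succ_self i)
          rw [dif_pos (Nat.lt_succ_self i)] at this
          rw [this, ha]
      rw [heq]
      exact MeasurableSet.iUnion fun a => MeasurableSet.iUnion fun ha =>
        MeasurableSpace.measurableSet_generateFrom ⟨i + 1, _, rfl⟩
    rw [show (inferInstance : MeasurableSpace (ℕ → Bool)) = MeasurableSpace.pi from rfl]
    refine iSup_le fun i => ?_
    rw [← measurable_iff_comap_le]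
    exact @measurable_to_countable' Bool (ℕ → Bool) _ _
      (MeasurableSpace.generateFrom CylSet) _ (fun b => key i b)
  · refine MeasurableSpace.generateFrom_le fun S hS => ?_
    obtain ⟨n, a, rfl⟩ := hS
    exact cyl_measurableSet n a

lemma isPiSystem_CylSet : IsPiSystem CylSet := by
  rintro S ⟨n, a, rfl⟩ T ⟨m, b, rfl⟩ hne
  obtain ⟨x, hxS, hxT⟩ := hne
  rcases le_total n m with hnm | hmn
  · refine ⟨m, b, ?_⟩
    ext y
    simp only [Set.mem_inter_iff, Set.mem_setOf_eq]
    constructor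
    · rintro ⟨_, h2⟩; exact h2
    · intro h
      refine ⟨fun i hi => ?_, h⟩
      rw [h i (lt_of_lt_of_le hi hnm), ← hxT i (lt_of_lt_of_le hi hnm), hxS i hi]
  · refine ⟨n, a, ?_⟩
    ext y
    simp only [Set.mem_inter_iff, Set.mem_setOf_eq]
    constructor
    · rintro ⟨h1, _⟩; exact h1
    · intro h
      refine ⟨h, fun i hi => ?_⟩
      rw [h i (lt_of_lt_of_le hi hmn), ← hxS i (lt_of_lt_of_le hi hmn), hxT i hi]

lemma measurable_Tod : Measurable Tod := by
  rw [measurable_pi_iff]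
  intro k
  have : (fun x : ℕ → Bool => Tod x k)
      = fun x => if ∀ i < k, x i = true then !(x k) else x k := rfl
  rw [this]
  refine Measurable.ite ?_ ?_ ?_
  · exact cyl_measurableSet k (fun _ => true)
  · exact (Measurable.of_discrete (f := not)).comp (measurable_pi_apply k)
  · exact measurable_pi_apply k

lemma measurable_TodInv : Measurable TodInv := by
  rw [measurable_pi_iff]
  intro k
  have : (fun x : ℕ → Bool => TodInv x k)
      = fun x => if ∀ i < k, x i = false then !(x k) else x k := rfl
  rw [this]
  refine Measurable.ite ?_ ?_ ?_
  · exact cyl_measurableSet k (fun _ => false)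
  · exact (Measurable.of_discrete (f := not)).comp (measurable_pi_apply k)
  · exact measurable_pi_apply k

lemma measurableSet_cyl0 (i : ℕ) : MeasurableSet (cyl0 i) := cyl_measurableSet i (fun _ => false)

lemma image_Tod_iter (j : ℕ) (S : Set (ℕ → Bool)) : Tod^[j] '' S = TodInv^[j] ⁻¹' S :=
  congrFun (Set.image_eq_preimage_of_inverse (Tod_leftInv.iterate j) (Tod_rightInv.iterate j)) S

lemma measurableSet_Aset : MeasurableSet Aset := by
  unfold Aset
  refine MeasurableSet.iUnion fun i => MeasurableSet.iUnion fun _ =>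
    MeasurableSet.iUnion fun j => MeasurableSet.iUnion fun _ => ?_
  rw [image_Tod_iter]
  exact (measurable_TodInv.iterate j) (measurableSet_cyl0 i)

lemma measurable_zIter (n : ℤ) : Measurable (zIter n) := by
  unfold zIter
  by_cases h : 0 ≤ n
  · simp only [if_pos h]; exact measurable_Tod.iterate _
  · simp only [if_neg h]; exact measurable_TodInv.iterate _

lemma measurable_Phi : Measurable Phi := by
  rw [measurable_pi_iff]
  intro n
  unfold Phi
  refine measurable_to_countable' fun b => ?_
  have : (fun x : ℕ → Bool => @decide (zIter n x ∈ Aset) (Classical.propDecidable _)) ⁻¹' {b}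
      = if b then zIter n ⁻¹' Aset else (zIter n ⁻¹' Aset)ᶜ := by
    ext x
    cases b <;> simp [decide_eq_true_iff]
  rw [this]
  cases b
  · simpa using ((measurable_zIter n) measurableSet_Aset).compl
  · simpa using (measurable_zIter n) measurableSet_Aset
-- Part 4 : the Bernoulli measure, measure preservation and ergodicity of the odometer

lemma measurable_DN (n : ℕ) : Measurable (fun x : ℕ → Bool => DN n x) := by
  unfold DN
  exact Finset.measurable_sum _ fun i _ =>
    ((Measurable.of_discrete (f := Bool.toNat)).comp (measurable_pi_apply i)).const_mul (2 ^ i)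

lemma measurableSet_DNset (n m : ℕ) : MeasurableSet {x : ℕ → Bool | DN n x = m} :=
  measurable_DN n (measurableSet_singleton m)

lemma cyl_eq_DNset (n : ℕ) (a : ℕ → Bool) :
    {x : ℕ → Bool | ∀ i < n, x i = a i} = {x | DN n x = DN n a} := by
  ext x
  exact DN_prefix_iff x a

lemma DNset_eq_cyl {n m : ℕ} (hm : m < 2 ^ n) :
    {x : ℕ → Bool | DN n x = m} = {x | ∀ i < n, x i = m.testBit i} := by
  ext x
  exact DN_eq_iff hm x

section nu

variable {ν : Measure (ℕ → Bool)}
variable (hν : ∀ (n : ℕ) (a : ℕ → Bool), ν {x | ∀ i < n, x i = a i} = (2 : ℝ≥0∞)⁻¹ ^ n)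
include hν

lemma nu_univ : ν Set.univ = 1 := by
  have h := hν 0 (fun _ => false)
  simpa using h

lemma nu_prob : IsProbabilityMeasure ν := ⟨nu_univ hν⟩

lemma nu_DNset {n m : ℕ} (hm : m < 2 ^ n) :
    ν {x : ℕ → Bool | DN n x = m} = (2 : ℝ≥0∞)⁻¹ ^ n := by
  rw [DNset_eq_cyl hm]
  exact hν n _

lemma measurePreserving_Tod : MeasurePreserving Tod ν ν := by
  refine ⟨measurable_Tod, ?_⟩
  have hpre : ∀ (n : ℕ) (a : ℕ → Bool),
      Tod ⁻¹' {x | ∀ i < n, x i = a i} = {x | ∀ i < n, x i = TodInv a i} := by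
    intro n a
    ext x
    simp only [Set.mem_preimage, Set.mem_setOf_eq]
    constructor
    · intro h i hi
      have h2 := TodInv_congr h i hi
      rwa [TodInv_Tod] at h2
    · intro h i hi
      have h2 := Tod_congr h i hi
      rwa [Tod_TodInv] at h2
  haveI := nu_prob hν
  haveI : IsFiniteMeasure (Measure.map Tod ν) := by
    constructor
    rw [Measure.map_apply measurable_Tod MeasurableSet.univ]
    simp [nu_univ hν]
  apply ext_of_generate_finite CylSet generateFrom_CylSet isPiSystem_CylSet
  · rintro S ⟨n, a, rfl⟩
    rw [Measure.map_apply measurable_Tod (cyl_measurableSet n a), hpre, hν n _, hν n a]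
  · rw [Measure.map_apply measurable_Tod MeasurableSet.univ]
    simp

lemma inv_set_measure_inter {s : Set (ℕ → Bool)} (hs : MeasurableSet s)
    (hinv : Tod ⁻¹' s = s) {t : Set (ℕ → Bool)} (ht : MeasurableSet t) :
    ν (s ∩ t) = ν s * ν t := by
  haveI := nu_prob hν
  -- step: one application of Tod
  have step : ∀ (n m : ℕ), m < 2 ^ n →
      ν (s ∩ {x | DN n x = (m + 1) % 2 ^ n}) = ν (s ∩ {x | DN n x = m}) := by
    intro n m hm
    have hpre : Tod ⁻¹' (s ∩ {x | DN n x = (m + 1) % 2 ^ n}) = s ∩ {x | DN n x = m} := by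
      rw [Set.preimage_inter, hinv]
      congr 1
      ext x
      simp only [Set.mem_preimage, Set.mem_setOf_eq]
      rw [DN_Tod_mod]
      constructor
      · intro h
        have hmod : DN n x ≡ m [MOD 2 ^ n] := Nat.ModEq.add_right_cancel' 1 h
        have h1 := DN_lt n x
        calc DN n x = DN n x % 2 ^ n := (Nat.mod_eq_of_lt h1).symm
          _ = m % 2 ^ n := hmod
          _ = m := Nat.mod_eq_of_lt hm
      · intro h
        rw [h]
    rw [← hpre]
    exact ((measurePreserving_Tod hν).measure_preimage
      ((hs.inter (measurableSet_DNset n _)).nullMeasurableSet)).symm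
  -- all pieces have equal measure
  have alleq : ∀ (n j : ℕ), ν (s ∩ {x | DN n x = j % 2 ^ n}) = ν (s ∩ {x | DN n x = 0}) := by
    intro n j
    induction j with
    | zero => rw [Nat.zero_mod]
    | succ j ih =>
      have h1 : (j + 1) % 2 ^ n = (j % 2 ^ n + 1) % 2 ^ n := by
        rw [Nat.mod_add_mod]
      rw [h1, step n (j % 2 ^ n) (Nat.mod_lt _ (Nat.two_pow_pos n))]
      exact ih
  -- sum over the partition
  have hsum : ∀ n : ℕ, ν s = (2 ^ n : ℕ) * ν (s ∩ {x | DN n x = 0}) := by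
    intro n
    have hcover : s = ⋃ m ∈ Finset.range (2 ^ n), s ∩ {x | DN n x = m} := by
      ext x
      simp only [Set.mem_iUnion, Finset.mem_range, Set.mem_inter_iff, Set.mem_setOf_eq]
      constructor
      · intro hx
        exact ⟨DN n x, DN_lt n x, hx, rfl⟩
      · rintro ⟨m, _, hx, _⟩
        exact hx
    have hdisj : Set.PairwiseDisjoint (↑(Finset.range (2 ^ n)))
        (fun m => s ∩ {x : ℕ → Bool | DN n x = m}) := by
      intro a _ b _ hab
      refine Set.disjoint_left.2 fun x hxa hxb => hab ?_
      rw [← hxa.2, ← hxb.2]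
    calc ν s = ν (⋃ m ∈ Finset.range (2 ^ n), s ∩ {x | DN n x = m}) := by rw [← hcover]
      _ = ∑ m ∈ Finset.range (2 ^ n), ν (s ∩ {x | DN n x = m}) :=
          measure_biUnion_finset hdisj fun m _ => hs.inter (measurableSet_DNset n m)
      _ = ∑ m ∈ Finset.range (2 ^ n), ν (s ∩ {x | DN n x = 0}) := by
          refine Finset.sum_congr rfl fun m hm => ?_
          have := alleq n m
          rwa [Nat.mod_eq_of_lt (Finset.mem_range.1 hm)] at this
      _ = (2 ^ n : ℕ) * ν (s ∩ {x | DN n x = 0}) := by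
          rw [Finset.sum_const, Finset.card_range, nsmul_eq_mul]
  -- each piece has measure (1/2)^n ν s
  have hpiece : ∀ (n m : ℕ), m < 2 ^ n →
      ν (s ∩ {x | DN n x = m}) = (2 : ℝ≥0∞)⁻¹ ^ n * ν s := by
    intro n m hm
    have h1 : ν (s ∩ {x | DN n x = m}) = ν (s ∩ {x | DN n x = 0}) := by
      have := alleq n m
      rwa [Nat.mod_eq_of_lt hm] at this
    rw [h1, hsum n]
    have hcast : ((2 ^ n : ℕ) : ℝ≥0∞) = (2 : ℝ≥0∞) ^ n := by push_cast; ring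
    rw [hcast, ← mul_assoc]
    rw [← ENNReal.inv_pow, ENNReal.inv_mul_cancel (by positivity) (by simp), one_mul]
  -- extend to all measurable sets via π-system
  have hext : ν.restrict s = ν s • ν := by
    apply ext_of_generate_finite CylSet generateFrom_CylSet isPiSystem_CylSet
    · rintro S ⟨n, a, rfl⟩
      rw [Measure.restrict_apply (cyl_measurableSet n a), Measure.smul_apply, smul_eq_mul]
      rw [Set.inter_comm, hν n a, cyl_eq_DNset, hpiece n (DN n a) (DN_lt n a), mul_comm]
    · rw [Measure.restrict_apply MeasurableSet.univ, Set.univ_inter, Measure.smul_apply,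
        smul_eq_mul, nu_univ hν, mul_one]
  calc ν (s ∩ t) = ν (t ∩ s) := by rw [Set.inter_comm]
    _ = ν.restrict s t := (Measure.restrict_apply ht).symm
    _ = ν s * ν t := by rw [hext, Measure.smul_apply, smul_eq_mul]

lemma preErgodic_Tod : PreErgodic Tod ν := by
  constructor
  intro s hs hinv
  rw [Filter.eventuallyConst_set']
  have hself := inv_set_measure_inter hν hs hinv hs
  rw [Set.inter_self] at hself
  haveI := nu_prob hν
  rcases eq_or_ne (ν s) 0 with h0 | h0
  · left
    exact ae_eq_empty.2 h0
  · right
    have hne_top : ν s ≠ ⊤ := (measure_lt_top ν s).ne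
    have htr : (ν s).toReal = (ν s).toReal * (ν s).toReal := by
      conv_lhs => rw [hself]
      rw [ENNReal.toReal_mul]
    have hr0 : (ν s).toReal ≠ 0 := ENNReal.toReal_ne_zero.2 ⟨h0, hne_top⟩
    have hr1 : (ν s).toReal = 1 := by
      have := mul_left_cancel₀ hr0 (by rw [mul_one, ← htr] : (ν s).toReal * 1 = (ν s).toReal * (ν s).toReal)
      exact this.symm
    have hs1 : ν s = 1 := (ENNReal.toReal_eq_one_iff _).1 hr1
    rw [ae_eq_univ]
    rw [measure_compl hs hne_top, hs1, measure_univ, tsub_self]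

lemma ergodic_Tod : Ergodic Tod ν := ⟨measurePreserving_Tod hν, preErgodic_Tod hν⟩

end nu
-- Part 5 : Phi intertwines Tod and the shift; consequences

lemma zIter_Tod (n : ℤ) (x : ℕ → Bool) : zIter n (Tod x) = zIter (n + 1) x := by
  unfold zIter
  by_cases h : 0 ≤ n
  · rw [if_pos h, if_pos (by omega)]
    have ht : (n + 1).toNat = n.toNat + 1 := by omega
    rw [ht, ← Function.iterate_succ_apply]
  · rw [if_neg h]
    have hn : (-n).toNat = (-(n + 1)).toNat + 1 := by omega
    rw [hn, Function.iterate_succ_apply, TodInv_Tod]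
    by_cases h1 : 0 ≤ n + 1
    · have : n + 1 = 0 := by omega
      rw [if_pos h1, this]
      simp
    · rw [if_neg h1]

lemma Phi_Tod (x : ℕ → Bool) : Phi (Tod x) = shiftZ (Phi x) := by
  funext n
  show Phi (Tod x) n = Phi x (n + 1)
  unfold Phi
  congr 1
  · rw [zIter_Tod]

lemma measurable_shiftZ : Measurable shiftZ := by
  rw [measurable_pi_iff]
  intro n
  exact measurable_pi_apply (n + 1)

lemma measurableSet_cylZ (n : ℕ) (w : Fin n → Bool) : MeasurableSet (cylZ n w) := by
  have : cylZ n w = ⋂ i : Fin n, {z : ℤ → Bool | z ((i : ℕ) : ℤ) = w i} := by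
    ext z; simp [cylZ]
  rw [this]
  refine MeasurableSet.iInter fun i => ?_
  have h2 : {z : ℤ → Bool | z ((i : ℕ) : ℤ) = w i}
      = (fun z : ℤ → Bool => z ((i : ℕ) : ℤ)) ⁻¹' {w i} := rfl
  rw [h2]
  exact (measurable_pi_apply _) (measurableSet_singleton _)

section mu

variable {ν : Measure (ℕ → Bool)}
variable (hν : ∀ (n : ℕ) (a : ℕ → Bool), ν {x | ∀ i < n, x i = a i} = (2 : ℝ≥0∞)⁻¹ ^ n)
include hν

lemma mu_prob : IsProbabilityMeasure (Measure.map Phi ν) := by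
  haveI := nu_prob hν
  exact Measure.isProbabilityMeasure_map measurable_Phi.aemeasurable

lemma measurePreserving_shiftZ :
    MeasurePreserving shiftZ (Measure.map Phi ν) (Measure.map Phi ν) := by
  refine ⟨measurable_shiftZ, ?_⟩
  rw [Measure.map_map measurable_shiftZ measurable_Phi]
  have : shiftZ ∘ Phi = Phi ∘ Tod := by
    funext x
    simp [Function.comp_apply, Phi_Tod]
  rw [this, ← Measure.map_map measurable_Phi measurable_Tod,
    (measurePreserving_Tod hν).map_eq]

lemma ergodic_shiftZ : Ergodic shiftZ (Measure.map Phi ν) := by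
  refine ⟨measurePreserving_shiftZ hν, ?_⟩
  constructor
  intro s hs hinv
  rw [Filter.eventuallyConst_set']
  set s' : Set (ℕ → Bool) := Phi ⁻¹' s with hs'def
  have hs'm : MeasurableSet s' := measurable_Phi hs
  have hs'inv : Tod ⁻¹' s' = s' := by
    rw [hs'def, ← Set.preimage_comp]
    have : Phi ∘ Tod = shiftZ ∘ Phi := by
      funext x; simp [Function.comp_apply, Phi_Tod]
    rw [this, Set.preimage_comp, hinv]
  have halt := (preErgodic_Tod hν).aeconst_set hs'm hs'inv
  rw [Filter.eventuallyConst_set'] at halt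
  haveI := nu_prob hν
  rcases halt with h | h
  · left
    rw [ae_eq_empty] at h ⊢
    rw [Measure.map_apply measurable_Phi hs]
    exact h
  · right
    rw [ae_eq_univ] at h ⊢
    rw [Measure.map_apply measurable_Phi hs.compl]
    have : Phi ⁻¹' sᶜ = s'ᶜ := rfl
    rw [this]
    exact h

lemma mu_Ysub : Measure.map Phi ν Ysub = 1 := by
  have hYm : MeasurableSet Ysub := (isClosed_closure).measurableSet
  rw [Measure.map_apply measurable_Phi hYm]
  have : Phi ⁻¹' Ysub = Set.univ := by
    apply Set.eq_univ_of_forall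
    intro x
    exact subset_closure (Set.mem_range_self x)
  rw [this, nu_univ hν]

end mu

-- the set [β] pulls back to Aset
lemma zIter_zero (x : ℕ → Bool) : zIter 0 x = x := by
  unfold zIter
  rw [if_pos le_rfl]
  simp

lemma Phi_pre_beta : Phi ⁻¹' {z : ℤ → Bool | z 0 = true} = Aset := by
  ext x
  simp only [Set.mem_preimage, Set.mem_setOf_eq]
  unfold Phi
  rw [zIter_zero]
  exact ⟨fun h => @of_decide_eq_true _ (Classical.propDecidable _) h,
    fun h => @decide_eq_true _ (Classical.propDecidable _) h⟩

-- bounds on ν Aset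
section bounds

variable {ν : Measure (ℕ → Bool)}
variable (hν : ∀ (n : ℕ) (a : ℕ → Bool), ν {x | ∀ i < n, x i = a i} = (2 : ℝ≥0∞)⁻¹ ^ n)
include hν

lemma nu_Aset_lower : 5 / 32 ≤ ν Aset := by
  have hsub : ⋃ m ∈ Finset.range 5, {x : ℕ → Bool | DN 5 x = m} ⊆ Aset := by
    intro x hx
    simp only [Set.mem_iUnion, Finset.mem_range, Set.mem_setOf_eq] at hx
    obtain ⟨m, hm5, hxm⟩ := hx
    rw [mem_Aset_iff]
    exact ⟨5, le_rfl, by omega⟩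
  refine le_trans (le_of_eq ?_) (measure_mono hsub)
  have hdisj : Set.PairwiseDisjoint (↑(Finset.range 5))
      (fun m => {x : ℕ → Bool | DN 5 x = m}) := by
    intro a _ b _ hab
    refine Set.disjoint_left.2 fun x hxa hxb => hab ?_
    rw [← hxa, ← hxb]
  rw [measure_biUnion_finset hdisj fun m _ => measurableSet_DNset 5 m]
  have : ∀ m ∈ Finset.range 5, ν {x : ℕ → Bool | DN 5 x = m} = (2 : ℝ≥0∞)⁻¹ ^ 5 := by
    intro m hm
    exact nu_DNset hν (by have := Finset.mem_range.1 hm; omega)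
  rw [Finset.sum_congr rfl this, Finset.sum_const, Finset.card_range, nsmul_eq_mul,
    ← ENNReal.inv_pow]
  norm_num
  rw [div_eq_mul_inv]

lemma nu_Aset_upper : ν Aset ≤ 6 / 32 := by
  have hsub : Aset ⊆ (⋃ m ∈ Finset.range 5, {x : ℕ → Bool | DN 5 x = m}) ∪
      ⋃ k : ℕ, {x : ℕ → Bool | DN (k + 6) x = k + 5} := by
    intro x hx
    rw [mem_Aset_iff] at hx
    obtain ⟨i, hi5, hilt⟩ := hx
    revert hi5 hilt
    induction i using Nat.strong_induction_on with
    | _ i ih =>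
      intro hi5 hilt
      by_cases h5 : i = 5
      · subst h5
        left
        simp only [Set.mem_iUnion, Finset.mem_range, Set.mem_setOf_eq]
        exact ⟨DN 5 x, hilt, rfl⟩
      · by_cases hprev : DN (i - 1) x < i - 1
        · exact ih (i - 1) (by omega) (by omega) hprev
        · have hge : i - 1 ≤ DN (i - 1) x := by omega
          have hpow : i ≤ 2 ^ (i - 1) := by
            have h1 : i - 1 < 2 ^ (i - 1) := Nat.lt_two_pow_self
            omega
          have heq : DN (i - 1) x = DN i x := by
            rw [DN_mod (show i - 1 ≤ i by omega) x]
            exact Nat.mod_eq_of_lt (show DN i x < 2 ^ (i - 1) by omega)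
          have hDN : DN i x = i - 1 := by omega
          right
          simp only [Set.mem_iUnion, Set.mem_setOf_eq]
          refine ⟨i - 6, ?_⟩
          have h1 : i - 6 + 6 = i := by omega
          have h2 : i - 6 + 5 = i - 1 := by omega
          rw [h1, h2, hDN]
  calc ν Aset ≤ ν ((⋃ m ∈ Finset.range 5, {x : ℕ → Bool | DN 5 x = m}) ∪
      ⋃ k : ℕ, {x : ℕ → Bool | DN (k + 6) x = k + 5}) := measure_mono hsub
    _ ≤ ν (⋃ m ∈ Finset.range 5, {x : ℕ → Bool | DN 5 x = m}) +
        ν (⋃ k : ℕ, {x : ℕ → Bool | DN (k + 6) x = k + 5}) := measure_union_le _ _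
    _ ≤ 5 / 32 + 1 / 32 := by
        gcongr
        · -- first part equals 5/32
          have hdisj : Set.PairwiseDisjoint (↑(Finset.range 5))
              (fun m => {x : ℕ → Bool | DN 5 x = m}) := by
            intro a _ b _ hab
            refine Set.disjoint_left.2 fun x hxa hxb => hab ?_
            rw [← hxa, ← hxb]
          rw [measure_biUnion_finset hdisj fun m _ => measurableSet_DNset 5 m]
          have : ∀ m ∈ Finset.range 5, ν {x : ℕ → Bool | DN 5 x = m} = (2 : ℝ≥0∞)⁻¹ ^ 5 := by
            intro m hm
            exact nu_DNset hν (by have := Finset.mem_range.1 hm; omega)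
          rw [Finset.sum_congr rfl this, Finset.sum_const, Finset.card_range, nsmul_eq_mul,
            ← ENNReal.inv_pow]
          apply le_of_eq
          norm_num
          rw [div_eq_mul_inv]
        · calc ν (⋃ k : ℕ, {x : ℕ → Bool | DN (k + 6) x = k + 5})
              ≤ ∑' k : ℕ, ν {x : ℕ → Bool | DN (k + 6) x = k + 5} := measure_iUnion_le _
            _ = ∑' k : ℕ, (2 : ℝ≥0∞)⁻¹ ^ (k + 6) := by
                congr 1
                funext k
                exact nu_DNset hν (by
                  have h1 : k + 6 < 2 ^ (k + 6) := Nat.lt_two_pow_self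
                  omega)
            _ = (2 : ℝ≥0∞)⁻¹ ^ 6 * ∑' k : ℕ, (2 : ℝ≥0∞)⁻¹ ^ k := by
                rw [← ENNReal.tsum_mul_left]
                congr 1
                funext k
                ring
            _ = (2 : ℝ≥0∞)⁻¹ ^ 6 * 2 := by
                rw [ENNReal.tsum_geometric]
                congr 1
                have h12 : (1 : ℝ≥0∞) - 2⁻¹ = 2⁻¹ := by
                  rw [← ENNReal.inv_two_add_inv_two, ENNReal.add_sub_cancel_right (by norm_num)]
                rw [h12, inv_inv]
            _ = 1 / 32 := by
                rw [pow_succ, mul_assoc,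
                  ENNReal.inv_mul_cancel (by norm_num) (by norm_num), mul_one, ← ENNReal.inv_pow,
                  ← one_div]
                norm_num
    _ = 6 / 32 := by
        rw [ENNReal.div_add_div_same]
        norm_num

end bounds
-- Part 6 : entropy

def Kn (n : ℕ) : ℕ := Nat.log 2 n + 6

lemma Kn_ge5 (n : ℕ) : 5 ≤ Kn n := by unfold Kn; omega

lemma lt_two_pow_Kn {n : ℕ} (hn : 1 ≤ n) : n < 2 ^ Kn n := by
  calc n < 2 ^ (Nat.log 2 n + 1) := Nat.lt_pow_succ_log_self (by norm_num) n
    _ ≤ 2 ^ Kn n := Nat.pow_le_pow_right (by norm_num) (by unfold Kn; omega)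

lemma two_pow_Kn_le {n : ℕ} (hn : 1 ≤ n) : 2 ^ Kn n ≤ 64 * n := by
  have h := Nat.pow_log_le_self 2 (by omega : n ≠ 0)
  unfold Kn
  rw [pow_add]
  calc 2 ^ Nat.log 2 n * 2 ^ 6 ≤ n * 2 ^ 6 := Nat.mul_le_mul_right _ h
    _ = 64 * n := by norm_num [Nat.mul_comm]

def lowOcc (n ρ m : ℕ) : Prop := ∃ i, 5 ≤ i ∧ i ≤ Kn n ∧ (ρ % 2 ^ i + m) % 2 ^ i < i

def hiI (n : ℕ) (x : ℕ → Bool) (m : ℕ) : Prop := ∃ i, Kn n < i ∧ DN i x + m < i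

def hiJ (n : ℕ) (x : ℕ → Bool) (m : ℕ) : Prop :=
  ∃ i, Kn n < i ∧ 2 ^ i ≤ DN i x + m ∧ DN i x + m < 2 ^ i + i

def betaOf (n ρ : ℕ) : ℕ := (2 ^ Kn n - ρ % 2 ^ Kn n) % 2 ^ Kn n

open scoped Classical in
noncomputable def EsetX (n : ℕ) (x : ℕ → Bool) : Finset ℕ :=
  (Finset.range n).filter (hiI n x)

open scoped Classical in
noncomputable def FsetX (n : ℕ) (x : ℕ → Bool) : Finset ℕ :=
  (Finset.range n).filter (hiJ n x)

lemma mem_EsetX {n : ℕ} {x : ℕ → Bool} {m : ℕ} : m ∈ EsetX n x ↔ m < n ∧ hiI n x m := by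
  simp [EsetX, Finset.mem_filter, Finset.mem_range]

lemma mem_FsetX {n : ℕ} {x : ℕ → Bool} {m : ℕ} : m ∈ FsetX n x ↔ m < n ∧ hiJ n x m := by
  simp [FsetX, Finset.mem_filter, Finset.mem_range]

lemma interval_of_dc (S : Finset ℕ) (n b : ℕ) (hsub : ∀ m ∈ S, m < n ∧ b ≤ m)
    (hdc : ∀ m ∈ S, ∀ m', b ≤ m' → m' ≤ m → m' ∈ S) {m : ℕ} (hmn : m < n) :
    m ∈ S ↔ b ≤ m ∧ m < b + S.card := by
  constructor
  · intro hm
    refine ⟨(hsub m hm).2, ?_⟩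
    have hI : Finset.Icc b m ⊆ S := fun y hy => by
      rw [Finset.mem_Icc] at hy
      exact hdc m hm y hy.1 hy.2
    have hc := Finset.card_le_card hI
    rw [Nat.card_Icc] at hc
    have hbm := (hsub m hm).2
    omega
  · rintro ⟨hbm, hcard⟩
    by_contra hm
    have hS : S ⊆ Finset.Ico b m := by
      intro y hy
      rw [Finset.mem_Ico]
      refine ⟨(hsub y hy).2, ?_⟩
      by_contra hylt
      exact hm (hdc y hy m hbm (by omega))
    have hc := Finset.card_le_card hS
    rw [Nat.card_Ico] at hc
    omega

lemma mem_Aset_iter (x : ℕ → Bool) (m : ℕ) :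
    Tod^[m] x ∈ Aset ↔ ∃ i, 5 ≤ i ∧ (DN i x + m) % 2 ^ i < i := by
  rw [mem_Aset_iff]
  constructor
  · rintro ⟨i, h5, hlt⟩
    rw [DN_Tod_iter] at hlt
    exact ⟨i, h5, hlt⟩
  · rintro ⟨i, h5, hlt⟩
    refine ⟨i, h5, ?_⟩
    rw [DN_Tod_iter]
    exact hlt

lemma occ_split {n : ℕ} (hn : 1 ≤ n) (x : ℕ → Bool) {m : ℕ} (hmn : m < n) :
    (∃ i, 5 ≤ i ∧ (DN i x + m) % 2 ^ i < i) ↔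
      (lowOcc n (DN (Kn n) x) m ∨ hiI n x m ∨ hiJ n x m) := by
  constructor
  · rintro ⟨i, h5, hlt⟩
    by_cases hiK : i ≤ Kn n
    · exact Or.inl ⟨i, h5, hiK, by rwa [← DN_mod hiK]⟩
    · push_neg at hiK
      by_cases hc : DN i x + m < 2 ^ i
      · rw [Nat.mod_eq_of_lt hc] at hlt
        exact Or.inr (Or.inl ⟨i, hiK, hlt⟩)
      · push_neg at hc
        have hm2 : m < 2 ^ i :=
          lt_of_lt_of_le (lt_of_lt_of_le hmn (le_of_lt (lt_two_pow_Kn hn)))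
            (Nat.pow_le_pow_right (by norm_num) (le_of_lt hiK))
        have hr2 : DN i x + m < 2 * 2 ^ i := by
          have := DN_lt i x
          omega
        rw [Nat.mod_eq_sub_mod hc, Nat.mod_eq_of_lt (by omega)] at hlt
        exact Or.inr (Or.inr ⟨i, hiK, hc, by omega⟩)
  · rintro (⟨i, h5, hiK, h⟩ | ⟨i, hiK, h⟩ | ⟨i, hiK, h1, h2⟩)
    · exact ⟨i, h5, by rwa [← DN_mod hiK] at h⟩
    · refine ⟨i, by have := Kn_ge5 n; omega, ?_⟩
      rw [Nat.mod_eq_of_lt (lt_trans h (Nat.lt_two_pow_self (n := i)))]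
      exact h
    · refine ⟨i, by have := Kn_ge5 n; omega, ?_⟩
      have hip := Nat.lt_two_pow_self (n := i)
      rw [Nat.mod_eq_sub_mod h1, Nat.mod_eq_of_lt (by omega)]
      omega

lemma hiI_iff {n : ℕ} (hn : 1 ≤ n) (x : ℕ → Bool) {m : ℕ} (hmn : m < n) :
    hiI n x m ↔ m < (EsetX n x).card := by
  have h := interval_of_dc (EsetX n x) n 0
    (fun m hm => ⟨(mem_EsetX.1 hm).1, Nat.zero_le _⟩)
    (fun m hm m' _ hm'm => mem_EsetX.2 ⟨by have := (mem_EsetX.1 hm).1; omega, by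
      obtain ⟨i, hK, hlt⟩ := (mem_EsetX.1 hm).2
      exact ⟨i, hK, by omega⟩⟩) hmn
  constructor
  · intro hi
    have := (h.1 (mem_EsetX.2 ⟨hmn, hi⟩)).2
    omega
  · intro hc
    exact (mem_EsetX.1 (h.2 ⟨Nat.zero_le _, by omega⟩)).2

lemma hiJ_start {n : ℕ} (hn : 1 ≤ n) (x : ℕ → Bool) {m i : ℕ} (hmn : m < n)
    (hK : Kn n < i) (h1 : 2 ^ i ≤ DN i x + m) :
    2 ^ i - DN i x = betaOf n (DN (Kn n) x) := by
  have hρp : DN (Kn n) x < 2 ^ Kn n := DN_lt _ _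
  have hppos : 0 < 2 ^ Kn n := Nat.two_pow_pos _
  have hnp : n < 2 ^ Kn n := lt_two_pow_Kn hn
  have hdvd : 2 ^ Kn n ∣ 2 ^ i := pow_dvd_pow 2 (le_of_lt hK)
  have hDNmod : DN (Kn n) x = DN i x % 2 ^ Kn n := DN_mod (le_of_lt hK) x
  have hDN_lt : DN i x < 2 ^ i := DN_lt i x
  have hs1 : 2 ^ i - DN i x + DN i x = 2 ^ i := Nat.sub_add_cancel (le_of_lt hDN_lt)
  have hsm : 2 ^ i - DN i x ≤ m := by omega
  have hsp : 2 ^ i - DN i x < 2 ^ Kn n := by omega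
  have e1 : DN (Kn n) x ≡ DN i x [MOD 2 ^ Kn n] := by
    rw [hDNmod]
    exact Nat.mod_modEq _ _
  have hc1 : 2 ^ i - DN i x + DN (Kn n) x ≡ 0 [MOD 2 ^ Kn n] := by
    calc 2 ^ i - DN i x + DN (Kn n) x
        ≡ 2 ^ i - DN i x + DN i x [MOD 2 ^ Kn n] := Nat.ModEq.add_left _ e1
      _ = 2 ^ i := hs1
      _ ≡ 0 [MOD 2 ^ Kn n] := (Nat.modEq_zero_iff_dvd).2 hdvd
  have hρmod : DN (Kn n) x % 2 ^ Kn n = DN (Kn n) x := Nat.mod_eq_of_lt hρp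
  have hc2 : betaOf n (DN (Kn n) x) + DN (Kn n) x ≡ 0 [MOD 2 ^ Kn n] := by
    unfold betaOf
    rw [hρmod]
    calc (2 ^ Kn n - DN (Kn n) x) % 2 ^ Kn n + DN (Kn n) x
        ≡ 2 ^ Kn n - DN (Kn n) x + DN (Kn n) x [MOD 2 ^ Kn n] :=
          Nat.ModEq.add_right _ (Nat.mod_modEq _ _)
      _ = 2 ^ Kn n := Nat.sub_add_cancel (le_of_lt hρp)
      _ ≡ 0 [MOD 2 ^ Kn n] := (Nat.modEq_zero_iff_dvd).2 dvd_rfl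
  have hcc : 2 ^ i - DN i x ≡ betaOf n (DN (Kn n) x) [MOD 2 ^ Kn n] :=
    Nat.ModEq.add_right_cancel' _ (hc1.trans hc2.symm)
  have hβ : betaOf n (DN (Kn n) x) < 2 ^ Kn n := Nat.mod_lt _ hppos
  have := hcc
  unfold Nat.ModEq at this
  rwa [Nat.mod_eq_of_lt hsp, Nat.mod_eq_of_lt hβ] at this

lemma hiJ_iff {n : ℕ} (hn : 1 ≤ n) (x : ℕ → Bool) {m : ℕ} (hmn : m < n) :
    hiJ n x m ↔ (betaOf n (DN (Kn n) x) ≤ m ∧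
      m < betaOf n (DN (Kn n) x) + (FsetX n x).card) := by
  have hsub : ∀ m ∈ FsetX n x, m < n ∧ betaOf n (DN (Kn n) x) ≤ m := by
    intro m hm
    obtain ⟨hmn', i, hK, h1, h2⟩ := mem_FsetX.1 hm
    refine ⟨hmn', ?_⟩
    rw [← hiJ_start hn x hmn' hK h1]
    have := DN_lt i x
    omega
  have hdc : ∀ m ∈ FsetX n x, ∀ m', betaOf n (DN (Kn n) x) ≤ m' → m' ≤ m →
      m' ∈ FsetX n x := by
    intro m hm m' hβm' hm'm
    obtain ⟨hmn', i, hK, h1, h2⟩ := mem_FsetX.1 hm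
    have hstart := hiJ_start hn x hmn' hK h1
    have := DN_lt i x
    refine mem_FsetX.2 ⟨by omega, ⟨i, hK, by omega, by omega⟩⟩
  have h := interval_of_dc (FsetX n x) n (betaOf n (DN (Kn n) x)) hsub hdc hmn
  constructor
  · intro hj
    exact h.1 (mem_FsetX.2 ⟨hmn, hj⟩)
  · intro hc
    exact (mem_FsetX.1 (h.2 hc)).2

open scoped Classical in
noncomputable def Gdecode (n : ℕ) (d : ℕ × ℕ × ℕ) : Fin n → Bool := fun i =>
  decide (lowOcc n d.1 (i : ℕ) ∨ (i : ℕ) < d.2.1 ∨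
    (betaOf n d.1 ≤ (i : ℕ) ∧ (i : ℕ) < betaOf n d.1 + d.2.2))

lemma zIter_natCast (m : ℕ) (x : ℕ → Bool) : zIter (m : ℤ) x = Tod^[m] x := by
  unfold zIter
  rw [if_pos (Int.natCast_nonneg m), Int.toNat_natCast]

lemma word_eq {n : ℕ} (hn : 1 ≤ n) (x : ℕ → Bool) :
    (fun i : Fin n => Phi x ((i : ℕ) : ℤ))
      = Gdecode n (DN (Kn n) x, (EsetX n x).card, (FsetX n x).card) := by
  funext i
  unfold Phi Gdecode
  rw [Bool.eq_iff_iff]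
  simp only [decide_eq_true_eq]
  rw [zIter_natCast, mem_Aset_iter, occ_split hn x i.isLt]
  constructor
  · rintro (h | h | h)
    · exact Or.inl h
    · exact Or.inr (Or.inl ((hiI_iff hn x i.isLt).1 h))
    · exact Or.inr (Or.inr ((hiJ_iff hn x i.isLt).1 h))
  · rintro (h | h | h)
    · exact Or.inl h
    · exact Or.inr (Or.inl ((hiI_iff hn x i.isLt).2 h))
    · exact Or.inr (Or.inr ((hiJ_iff hn x i.isLt).2 h))

/-- The finite set of possible codes. -/
noncomputable def Dcodes (n : ℕ) : Finset (ℕ × ℕ × ℕ) :=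
  (Finset.range (2 ^ Kn n)) ×ˢ ((Finset.range (n + 1)) ×ˢ (Finset.range (n + 1)))

lemma card_Dcodes (n : ℕ) : (Dcodes n).card = 2 ^ Kn n * ((n + 1) * (n + 1)) := by
  unfold Dcodes
  rw [Finset.card_product, Finset.card_product, Finset.card_range, Finset.card_range]

-- Gibbs inequality
lemma sum_negMulLog_le_log_card {ι : Type*} [Fintype ι] (p : ι → ℝ) (h0 : ∀ i, 0 ≤ p i)
    (h1 : ∑ i, p i = 1) (R : Finset ι) (hR : ∀ i, p i ≠ 0 → i ∈ R) :
    ∑ i, Real.negMulLog (p i) ≤ Real.log R.card := by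
  classical
  set T := Finset.univ.filter (fun i => p i ≠ 0) with hT
  have hTR : T ⊆ R := fun i hi => hR i (Finset.mem_filter.1 hi).2
  have hsumT : ∑ i ∈ T, p i = 1 := by
    rw [hT, Finset.sum_filter_ne_zero, h1]
  have hTne : T.Nonempty := by
    by_contra hc
    rw [Finset.not_nonempty_iff_eq_empty] at hc
    rw [hc, Finset.sum_empty] at hsumT
    norm_num at hsumT
  have heq : ∑ i, Real.negMulLog (p i) = ∑ i ∈ T, p i • Real.log (p i)⁻¹ := by
    have h2 : ∑ i, Real.negMulLog (p i) = ∑ i ∈ T, Real.negMulLog (p i) :=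
      (Finset.sum_subset (Finset.subset_univ T) (fun i _ hi => by
        have hp : p i = 0 := by
          by_contra hcp
          exact hi (Finset.mem_filter.2 ⟨Finset.mem_univ _, hcp⟩)
        rw [hp, Real.negMulLog_zero])).symm
    rw [h2]
    refine Finset.sum_congr rfl fun i hi => ?_
    rw [smul_eq_mul, Real.log_inv, Real.negMulLog]
    ring
  have hpos : ∀ i ∈ T, (p i)⁻¹ ∈ Set.Ioi (0 : ℝ) := by
    intro i hi
    have hne := (Finset.mem_filter.1 hi).2
    have h0i := h0 i
    have : 0 < p i := lt_of_le_of_ne h0i (Ne.symm hne)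
    exact Set.mem_Ioi.2 (by positivity)
  have hjen := (strictConcaveOn_log_Ioi.concaveOn).le_map_sum
      (fun i _ => h0 i) hsumT hpos
  have hsum_inv : ∑ i ∈ T, p i • (p i)⁻¹ = (T.card : ℝ) := by
    have hone : ∀ i ∈ T, p i • (p i)⁻¹ = 1 := fun i hi => by
      have hne := (Finset.mem_filter.1 hi).2
      rw [smul_eq_mul, mul_inv_cancel₀ hne]
    rw [Finset.sum_congr rfl hone, Finset.sum_const, nsmul_eq_mul, mul_one]
  rw [heq]
  calc ∑ i ∈ T, p i • Real.log (p i)⁻¹ ≤ Real.log (∑ i ∈ T, p i • (p i)⁻¹) := hjen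
    _ = Real.log T.card := by rw [hsum_inv]
    _ ≤ Real.log R.card := Real.log_le_log
        (by exact_mod_cast Finset.card_pos.2 hTne)
        (Nat.cast_le.2 (Finset.card_le_card hTR))

section ent

variable {ν : Measure (ℕ → Bool)}
variable (hν : ∀ (n : ℕ) (a : ℕ → Bool), ν {x | ∀ i < n, x i = a i} = (2 : ℝ≥0∞)⁻¹ ^ n)
include hν

lemma sum_mu_cylZ (n : ℕ) : ∑ w : Fin n → Bool, Measure.map Phi ν (cylZ n w) = 1 := by
  haveI := mu_prob hν
  have hdis : Set.PairwiseDisjoint (↑(Finset.univ : Finset (Fin n → Bool))) (cylZ n) := by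
    intro a _ b _ hab
    refine Set.disjoint_left.2 fun z hza hzb => hab ?_
    funext i
    rw [← hza i, ← hzb i]
  have hcov : ⋃ w ∈ (Finset.univ : Finset (Fin n → Bool)), cylZ n w = Set.univ := by
    apply Set.eq_univ_of_forall
    intro z
    simp only [Set.mem_iUnion]
    exact ⟨fun i => z ((i : ℕ) : ℤ), Finset.mem_univ _, fun i => rfl⟩
  calc ∑ w : Fin n → Bool, Measure.map Phi ν (cylZ n w)
      = Measure.map Phi ν (⋃ w ∈ (Finset.univ : Finset (Fin n → Bool)), cylZ n w) :=
        (measure_biUnion_finset hdis fun w _ => measurableSet_cylZ n w).symm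
    _ = 1 := by rw [hcov, measure_univ]

lemma mu_cylZ_mem {n : ℕ} (hn : 1 ≤ n) (w : Fin n → Bool)
    (h : Measure.map Phi ν (cylZ n w) ≠ 0) : w ∈ (Dcodes n).image (Gdecode n) := by
  rw [Measure.map_apply measurable_Phi (measurableSet_cylZ n w)] at h
  have hne : (Phi ⁻¹' cylZ n w).Nonempty := by
    rw [Set.nonempty_iff_ne_empty]
    intro hc
    rw [hc] at h
    simp at h
  obtain ⟨x, hx⟩ := hne
  have hw : w = fun i : Fin n => Phi x ((i : ℕ) : ℤ) := by
    funext i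
    exact (hx i).symm
  rw [Finset.mem_image]
  refine ⟨(DN (Kn n) x, (EsetX n x).card, (FsetX n x).card), ?_, ?_⟩
  · unfold Dcodes
    rw [Finset.mem_product, Finset.mem_product]
    dsimp only
    refine ⟨Finset.mem_range.2 (DN_lt _ _), ?_, ?_⟩
    · rw [Finset.mem_range]
      have h1 : (EsetX n x).card ≤ n := by
        classical
        calc (EsetX n x).card ≤ (Finset.range n).card :=
            Finset.card_le_card (by unfold EsetX; exact Finset.filter_subset _ _)
          _ = n := Finset.card_range n
      omega
    · rw [Finset.mem_range]
      have h1 : (FsetX n x).card ≤ n := by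
        classical
        calc (FsetX n x).card ≤ (Finset.range n).card :=
            Finset.card_le_card (by unfold FsetX; exact Finset.filter_subset _ _)
          _ = n := Finset.card_range n
      omega
  · rw [hw, word_eq hn x]

lemma Hn_le {n : ℕ} (hn : 1 ≤ n) :
    ∑ w : Fin n → Bool, Real.negMulLog ((Measure.map Phi ν (cylZ n w)).toReal)
      ≤ Real.log ((2 ^ Kn n * ((n + 1) * (n + 1)) : ℕ) : ℝ) := by
  haveI := mu_prob hν
  have h1 : ∑ w : Fin n → Bool, (Measure.map Phi ν (cylZ n w)).toReal = 1 := by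
    rw [← ENNReal.toReal_sum (fun w _ => measure_ne_top _ _), sum_mu_cylZ hν n]
    simp
  have hmain := sum_negMulLog_le_log_card
    (fun w : Fin n → Bool => (Measure.map Phi ν (cylZ n w)).toReal)
    (fun w => ENNReal.toReal_nonneg) h1 ((Dcodes n).image (Gdecode n))
    (fun w hw => mu_cylZ_mem hν hn w (fun hc => hw (by
      show ((Measure.map Phi ν) (cylZ n w)).toReal = 0
      rw [hc]; simp)))
  refine le_trans hmain ?_
  have hcard : (((Dcodes n).image (Gdecode n)).card : ℝ)
      ≤ ((2 ^ Kn n * ((n + 1) * (n + 1)) : ℕ) : ℝ) := by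
    have := Finset.card_image_le (s := Dcodes n) (f := Gdecode n)
    rw [card_Dcodes] at this
    exact_mod_cast this
  have hpos : (0 : ℝ) < (((Dcodes n).image (Gdecode n)).card : ℝ) := by
    have hne : ((Dcodes n).image (Gdecode n)).Nonempty := by
      refine Finset.image_nonempty.2 ?_
      refine ⟨(0, 0, 0), ?_⟩
      unfold Dcodes
      rw [Finset.mem_product, Finset.mem_product]
      dsimp only
      refine ⟨Finset.mem_range.2 (Nat.two_pow_pos _), ?_, ?_⟩ <;>
        exact Finset.mem_range.2 (by omega)
    exact_mod_cast Finset.card_pos.2 hne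
  exact Real.log_le_log hpos hcard

lemma entropy_tendsto :
    Filter.Tendsto
      (fun n : ℕ =>
        (∑ w : Fin n → Bool, Real.negMulLog ((Measure.map Phi ν (cylZ n w)).toReal)) / n)
      Filter.atTop (nhds 0) := by
  haveI := mu_prob hν
  have hnonneg : ∀ n : ℕ,
      0 ≤ (∑ w : Fin n → Bool, Real.negMulLog ((Measure.map Phi ν (cylZ n w)).toReal)) / n := by
    intro n
    apply div_nonneg _ (Nat.cast_nonneg n)
    refine Finset.sum_nonneg fun w _ => Real.negMulLog_nonneg ENNReal.toReal_nonneg ?_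
    have hle : Measure.map Phi ν (cylZ n w) ≤ 1 := prob_le_one
    calc (Measure.map Phi ν (cylZ n w)).toReal ≤ (1 : ℝ≥0∞).toReal :=
        ENNReal.toReal_mono (by simp) hle
      _ = 1 := by simp
  have hub : ∀ n : ℕ, 1 ≤ n →
      (∑ w : Fin n → Bool, Real.negMulLog ((Measure.map Phi ν (cylZ n w)).toReal)) / n
        ≤ 3 * Real.log 128 / n + 3 * (Real.log n / n) := by
    intro n hn
    have h1 := Hn_le hν hn
    have hcard : ((2 ^ Kn n * ((n + 1) * (n + 1)) : ℕ) : ℝ) ≤ ((128 * n : ℕ) : ℝ) ^ 3 := by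
      have h2 := two_pow_Kn_le hn
      have h3 : n + 1 ≤ 2 * n := by omega
      have h4 : 2 ^ Kn n * ((n + 1) * (n + 1)) ≤ (64 * n) * ((2 * n) * (2 * n)) :=
        Nat.mul_le_mul h2 (Nat.mul_le_mul h3 h3)
      have h5 : (64 * n) * ((2 * n) * (2 * n)) ≤ (128 * n) ^ 3 := by
        have hnn : 1 ≤ n := hn
        nlinarith
      exact_mod_cast le_trans h4 h5
    have hlog : Real.log ((2 ^ Kn n * ((n + 1) * (n + 1)) : ℕ) : ℝ)
        ≤ 3 * Real.log 128 + 3 * Real.log n := by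
      calc Real.log ((2 ^ Kn n * ((n + 1) * (n + 1)) : ℕ) : ℝ)
          ≤ Real.log (((128 * n : ℕ) : ℝ) ^ 3) := by
            apply Real.log_le_log _ hcard
            positivity
          _ = 3 * Real.log ((128 * n : ℕ) : ℝ) := by
            rw [Real.log_pow]
            push_cast
            ring
          _ = 3 * (Real.log 128 + Real.log n) := by
            congr 1
            push_cast
            rw [Real.log_mul (by norm_num) (by positivity)]
          _ = 3 * Real.log 128 + 3 * Real.log n := by ring
    have hnpos : (0 : ℝ) < n := by exact_mod_cast hn
    calc (∑ w : Fin n → Bool, Real.negMulLog ((Measure.map Phi ν (cylZ n w)).toReal)) / n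
        ≤ (3 * Real.log 128 + 3 * Real.log n) / n := by
          gcongr
          exact le_trans h1 hlog
      _ = 3 * Real.log 128 / n + 3 * (Real.log n / n) := by ring
  have hlim : Filter.Tendsto (fun n : ℕ => 3 * Real.log 128 / n + 3 * (Real.log n / n))
      Filter.atTop (nhds 0) := by
    have l1 : Filter.Tendsto (fun n : ℕ => 3 * Real.log 128 / n) Filter.atTop (nhds 0) :=
      tendsto_const_div_atTop_nhds_zero_nat _
    have l2 : Filter.Tendsto (fun n : ℕ => Real.log n / n) Filter.atTop (nhds 0) := by
      have hcomp := (Real.tendsto_pow_log_div_mul_add_atTop 1 0 1 one_ne_zero).comp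
        (tendsto_natCast_atTop_atTop (R := ℝ))
      refine hcomp.congr fun n => ?_
      simp [Function.comp]
    have l2' : Filter.Tendsto (fun n : ℕ => 3 * (Real.log n / n)) Filter.atTop (nhds 0) := by
      simpa using l2.const_mul 3
    simpa using l1.add l2'
  refine squeeze_zero' (Filter.Eventually.of_forall hnonneg) ?_ hlim
  filter_upwards [Filter.eventually_ge_atTop 1] with n hn
  exact hub n hn

end ent

/-- `μ = Φ_*ν` is shift-invariant, ergodic, gives `Y` full measure, has
measure-theoretic entropy `0` (i.e. `H_n(μ)/n → 0` for the cylinder partitions, where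
`H_n(μ) = Σ_{|w|=n} −μ[w] log μ[w]`), and `5/32 ≤ μ([β]) ≤ 6/32`. -/
theorem stmt16 (ν : Measure (ℕ → Bool))
    (hν : ∀ (n : ℕ) (a : ℕ → Bool), ν {x | ∀ i < n, x i = a i} = (2 : ℝ≥0∞)⁻¹ ^ n)
    (μ : Measure (ℤ → Bool)) (hμ : μ = Measure.map Phi ν) :
    MeasurePreserving shiftZ μ μ ∧
    Ergodic shiftZ μ ∧
    μ Ysub = 1 ∧
    Filter.Tendsto
      (fun n : ℕ =>
        (∑ w : Fin n → Bool, Real.negMulLog ((μ (cylZ n w)).toReal)) / n)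
      Filter.atTop (nhds 0) ∧
    5 / 32 ≤ μ {z : ℤ → Bool | z 0 = true} ∧
    μ {z : ℤ → Bool | z 0 = true} ≤ 6 / 32 := by
  subst hμ
  have hbeta : MeasurableSet {z : ℤ → Bool | z 0 = true} := by
    have h : {z : ℤ → Bool | z 0 = true} = (fun z : ℤ → Bool => z 0) ⁻¹' {true} := rfl
    rw [h]
    exact (measurable_pi_apply 0) (measurableSet_singleton _)
  refine ⟨measurePreserving_shiftZ hν, ergodic_shiftZ hν, mu_Ysub hν, entropy_tendsto hν, ?_, ?_⟩
  · rw [Measure.map_apply measurable_Phi hbeta, Phi_pre_beta]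
    exact nu_Aset_lower hν
  · rw [Measure.map_apply measurable_Phi hbeta, Phi_pre_beta]
    exact nu_Aset_upper hν
end

section
/- Let y = Φ(x) with x ∈ X, and let ψ_0: Z → ℝ be ψ_0(z) = −2 if z_0 = β and 0 if z_0 = α. Then for every d ∈ ℕ, the Birkhoff sum satisfies S_d ψ_0(y) ≤ −2 ν(A) d + 4 + 2 log_2 d, where S_d ψ_0(y) = Σ_{i=0}^{d-1} ψ_0(σ^i y) and ν is the Bernoulli(1/2,1/2) measure on X. -/
open MeasureTheory Filter Topology
open scoped ENNReal

/-- The potential `ψ_0(z) = −2` if `z_0 = β`, `0` if `z_0 = α`. -/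
def psi0 (z : ℤ → Bool) : ℝ := if z 0 = true then -2 else 0


namespace S17


lemma DN_succ (n : ℕ) (x : ℕ → Bool) : DN (n+1) x = DN n x + 2^n * (x n).toNat :=
  Finset.sum_range_succ _ n

lemma DN_congr {n : ℕ} {x y : ℕ → Bool} (h : ∀ i < n, x i = y i) : DN n x = DN n y :=
  Finset.sum_congr rfl fun i hi => by rw [h i (Finset.mem_range.mp hi)]

lemma DN_lt (n : ℕ) (x : ℕ → Bool) : DN n x < 2^n := by
  induction n with
  | zero => simp [DN]
  | succ n ih =>
    rw [DN_succ, pow_succ]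
    have ht : (x n).toNat ≤ 1 := Bool.toNat_le (x n)
    set P := 2^n
    nlinarith

lemma DN_add_pow_lt {m n : ℕ} {x : ℕ → Bool} (hmn : m < n) (hx : x m = false) :
    DN n x + 2^m < 2^n := by
  induction n with
  | zero => omega
  | succ n ih =>
    rw [DN_succ, pow_succ]
    rcases Nat.lt_succ_iff_lt_or_eq.mp hmn with h | h
    · have := ih h
      have ht : (x n).toNat ≤ 1 := Bool.toNat_le (x n)
      set P := 2^n
      nlinarith
    · rw [h] at hx ⊢
      rw [hx]
      have := DN_lt n x
      set P := 2^n
      simp only [Bool.toNat_false, Nat.mul_zero, Nat.add_zero]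
      omega

lemma sum_two_pow (n : ℕ) : ∑ i ∈ Finset.range n, 2^i = 2^n - 1 := by
  induction n with
  | zero => rfl
  | succ n ih =>
    rw [Finset.sum_range_succ, ih, pow_succ]
    have : 0 < 2^n := Nat.two_pow_pos n
    omega

lemma DN_all_true {n : ℕ} {x : ℕ → Bool} (h : ∀ i < n, x i = true) : DN n x = 2^n - 1 := by
  have h1 : DN n x = ∑ i ∈ Finset.range n, 2^i := by
    unfold DN
    refine Finset.sum_congr rfl fun i hi => by rw [h i (Finset.mem_range.mp hi)]; simp
  rw [h1, sum_two_pow]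

lemma DN_Tod (n : ℕ) (x : ℕ → Bool) : DN n (Tod x) = (DN n x + 1) % 2^n := by
  induction n with
  | zero => simp [DN]
  | succ n ih =>
    by_cases hA : ∀ i < n, x i = true
    · -- carry case
      have hx : DN n x = 2^n - 1 := DN_all_true hA
      have hTod0 : ∀ i < n, Tod x i = false := by
        intro i hi
        simp only [Tod]
        rw [if_pos (fun j hj => hA j (by omega)), hA i hi]
        rfl
      have hDT : DN n (Tod x) = 0 := by
        unfold DN
        refine Finset.sum_eq_zero fun i hi => by
          rw [hTod0 i (Finset.mem_range.mp hi)]; rfl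
      have hTn : Tod x n = !(x n) := by simp only [Tod]; rw [if_pos hA]
      rw [DN_succ, DN_succ, hDT, hTn, hx]
      have hP : 0 < 2^n := Nat.two_pow_pos n
      cases hxn : x n with
      | true =>
        have h2 : 2^n - 1 + 2^n * (true).toNat + 1 = 2^(n+1) := by
          rw [pow_succ]; simp; omega
        rw [h2, Nat.mod_self]
        simp
      | false =>
        have h1 : 2^n - 1 + 2^n * (false).toNat + 1 = 2^n := by simp; omega
        rw [h1, Nat.mod_eq_of_lt (by rw [pow_succ]; omega)]
        simp
    · -- no full carry
      push_neg at hA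
      obtain ⟨m, hm, hxm⟩ := hA
      have hxm' : x m = false := by simpa using hxm
      have hmlt : DN n x + 2^m < 2^n := DN_add_pow_lt hm hxm'
      have h2m : 0 < 2^m := Nat.two_pow_pos m
      have hIH : DN n (Tod x) = DN n x + 1 := by
        rw [ih, Nat.mod_eq_of_lt (by omega)]
      have hTn : Tod x n = x n := by
        simp only [Tod]
        rw [if_neg (by push_neg; exact ⟨m, hm, by rw [hxm']; simp⟩)]
      have hlt' : DN n x + 2^n * (x n).toNat + 2^m < 2^(n+1) := by
        rw [← DN_succ]; exact DN_add_pow_lt (by omega) hxm'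
      rw [DN_succ, DN_succ, hIH, hTn, Nat.mod_eq_of_lt (by omega)]
      omega

lemma DN_Tod_iter (n j : ℕ) (x : ℕ → Bool) :
    DN n (Tod^[j] x) = (DN n x + j) % 2^n := by
  induction j with
  | zero => simp [Nat.mod_eq_of_lt (DN_lt n x)]
  | succ j ih =>
    rw [Function.iterate_succ_apply', DN_Tod, ih, Nat.mod_add_mod, Nat.add_assoc]


lemma Tod_TodInv (x : ℕ → Bool) : Tod (TodInv x) = x := by
  funext k
  have hiff : (∀ i < k, TodInv x i = true) ↔ (∀ i < k, x i = false) := by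
    constructor
    · intro h
      intro i hi
      induction i using Nat.strong_induction_on with
      | _ i ihs =>
        have hall : ∀ j < i, x j = false := fun j hj => ihs j hj (by omega)
        have := h i hi
        simp only [TodInv] at this
        rw [if_pos hall] at this
        simpa using this
    · intro h i hi
      simp only [TodInv]
      rw [if_pos (fun j hj => h j (by omega)), h i hi]
      rfl
  by_cases hc : ∀ i < k, x i = false
  · have h1 : TodInv x k = !(x k) := by simp only [TodInv]; rw [if_pos hc]
    simp only [Tod]
    rw [if_pos (hiff.mpr hc), h1]
    simp
  · have h1 : TodInv x k = x k := by simp only [TodInv]; rw [if_neg hc]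
    simp only [Tod]
    rw [if_neg (fun h => hc (hiff.mp h)), h1]

lemma Tod_TodInv_iter (j : ℕ) (x : ℕ → Bool) : Tod^[j] (TodInv^[j] x) = x :=
  (Function.LeftInverse.iterate Tod_TodInv j) x

lemma DN_eq_zero_iff (n : ℕ) (x : ℕ → Bool) : DN n x = 0 ↔ ∀ i < n, x i = false := by
  unfold DN
  rw [Finset.sum_eq_zero_iff]
  constructor
  · intro h i hi
    have := h i (Finset.mem_range.mpr hi)
    have h2 : 0 < 2^i := Nat.two_pow_pos i
    rcases Nat.mul_eq_zero.mp this with h' | h'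
    · omega
    · exact Bool.toNat_eq_zero.mp h'
  · intro h i hi
    rw [h i (Finset.mem_range.mp hi)]
    rfl

lemma mem_Aset_iff (x : ℕ → Bool) : x ∈ Aset ↔ ∃ i, 5 ≤ i ∧ DN i x < i := by
  simp only [Aset, Set.mem_iUnion, Set.mem_image]
  constructor
  · rintro ⟨i, hi5, j, hji, y, hy, rfl⟩
    refine ⟨i, hi5, ?_⟩
    have hy0 : DN i y = 0 := (DN_eq_zero_iff i y).mpr hy
    rw [DN_Tod_iter, hy0, Nat.zero_add, Nat.mod_eq_of_lt (lt_of_lt_of_le hji (le_of_lt (Nat.lt_two_pow_self (n := i))))]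
    exact hji
  · rintro ⟨i, hi5, hlt⟩
    refine ⟨i, hi5, DN i x, hlt, TodInv^[DN i x] x, ?_, Tod_TodInv_iter _ x⟩
    set j := DN i x with hj
    set y := TodInv^[j] x with hy
    have hyx : Tod^[j] y = x := Tod_TodInv_iter j x
    have h1 : (DN i y + j) % 2^i = j := by
      rw [← DN_Tod_iter, hyx, ← hj]
    have hylt : DN i y < 2^i := DN_lt i y
    have hjlt : j < 2^i := lt_of_lt_of_le hlt (le_of_lt (Nat.lt_two_pow_self (n := i)))
    have hy0 : DN i y = 0 := by
      by_cases hc : DN i y + j < 2^i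
      · rw [Nat.mod_eq_of_lt hc] at h1; omega
      · have h2 : DN i y + j - 2^i < 2^i := by omega
        rw [Nat.mod_eq_sub_mod (by omega), Nat.mod_eq_of_lt h2] at h1
        omega
    exact (DN_eq_zero_iff i y).mp hy0

lemma DN_mod {m n : ℕ} (hmn : m ≤ n) (x : ℕ → Bool) : DN n x % 2^m = DN m x := by
  induction n with
  | zero =>
    have : m = 0 := by omega
    subst this
    simp [DN]
  | succ n ih =>
    rcases Nat.lt_succ_iff_lt_or_eq.mp (Nat.lt_succ_of_le hmn) with h | h
    · have hmn' : m ≤ n := by omega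
      have hdvd : (2:ℕ)^m ∣ 2^n * (x n).toNat := dvd_mul_of_dvd_left (pow_dvd_pow 2 hmn') _
      obtain ⟨c, hc⟩ := hdvd
      rw [DN_succ, hc, Nat.add_mul_mod_self_left]
      exact ih hmn'
    · rw [h]
      exact Nat.mod_eq_of_lt (DN_lt _ x)


lemma DN_inj {n : ℕ} {x y : ℕ → Bool} (h : DN n x = DN n y) : ∀ i < n, x i = y i := by
  induction n with
  | zero => omega
  | succ n ih =>
    rw [DN_succ, DN_succ] at h
    have hx := DN_lt n x
    have hy := DN_lt n y
    have htx : (x n).toNat ≤ 1 := Bool.toNat_le (x n)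
    have hty : (y n).toNat ≤ 1 := Bool.toNat_le (y n)
    have hkey : DN n x = DN n y ∧ x n = y n := by
      cases hx' : x n <;> cases hy' : y n <;> rw [hx', hy'] at h <;>
        simp only [Bool.toNat_false, Bool.toNat_true, Nat.mul_zero, Nat.mul_one,
          Nat.add_zero] at h
      · exact ⟨h, rfl⟩
      · omega
      · omega
      · exact ⟨by omega, rfl⟩
    intro i hi
    rcases Nat.lt_succ_iff_lt_or_eq.mp hi with h' | h'
    · exact ih hkey.1 i h'
    · subst h'
      exact hkey.2
  
lemma DN_bits {n j : ℕ} (hj : j < 2^n) : DN n (fun i => j.testBit i) = j := by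
  induction n generalizing j with
  | zero => simp [DN]; omega
  | succ n ih =>
    rw [DN_succ]
    have h1 : DN n (fun i => j.testBit i) = DN n (fun i => (j % 2^n).testBit i) := by
      apply DN_congr
      intro i hi
      rw [Nat.testBit_mod_two_pow]
      simp [hi]
    rw [h1, ih (Nat.mod_lt _ (Nat.two_pow_pos n))]
    have hv : j / 2^n = 0 ∨ j / 2^n = 1 := by
      have h0 : j / 2^n < 2 := Nat.div_lt_of_lt_mul (by rw [← pow_succ]; exact hj)
      interval_cases h : (j / 2^n) <;> simp
    have h2 : (Nat.testBit j n).toNat = j / 2^n := by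
      rw [Nat.testBit_eq_decide_div_mod_eq]
      rcases hv with h | h <;> rw [h] <;> simp
    rw [h2, Nat.mod_add_div]

lemma DN_eq_iff {n j : ℕ} (hj : j < 2^n) (x : ℕ → Bool) :
    DN n x = j ↔ ∀ i < n, x i = j.testBit i := by
  constructor
  · intro h
    exact DN_inj (by rw [h, DN_bits hj])
  · intro h
    rw [DN_congr h, DN_bits hj]

lemma count_resid {m : ℕ} (c r d : ℕ) (hm : 0 < m) (hr : r < m) :
    d / m ≤ ((Finset.range d).filter (fun n => (c + n) % m = r)).card := by
  set a := (m + r - c % m) % m with ha_def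
  have hcm : c % m < m := Nat.mod_lt _ hm
  have ha : a < m := Nat.mod_lt _ hm
  have hca : (c + a) % m = r := by
    have h1 : (c + a) % m = (c + (m + r - c % m)) % m := by
      rw [Nat.add_mod c a, Nat.add_mod c (m + r - c % m), ha_def,
        Nat.mod_mod_of_dvd _ (dvd_refl m)]
    rw [h1]
    have h2 : c + (m + r - c % m) = m * (c / m + 1) + r := by
      have h3 : m * (c / m) + c % m = c := Nat.div_add_mod c m
      have h4 : m * (c / m + 1) = m * (c / m) + m := by ring
      omega
    rw [h2, Nat.mul_add_mod, Nat.mod_eq_of_lt hr]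
  rw [← Finset.card_range (d / m)]
  apply Finset.card_le_card_of_injOn (fun t => a + t * m)
  · intro t ht
    simp only [Finset.mem_coe, Finset.mem_range] at ht
    simp only [Finset.mem_coe, Finset.mem_filter, Finset.mem_range]
    constructor
    · have h5 : (t + 1) * m ≤ (d / m) * m := Nat.mul_le_mul_right m (by omega)
      have h6 : (d / m) * m ≤ d := Nat.div_mul_le_self d m
      nlinarith
    · rw [← Nat.add_assoc, Nat.add_mul_mod_self_right, hca]
  · intro s _ t _ hst
    simp only at hst
    have : s * m = t * m := by omega
    exact Nat.eq_of_mul_eq_mul_right hm this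


def Dset (i : ℕ) : Set (ℕ → Bool) :=
  {y | DN i y < i ∧ ∀ i', 5 ≤ i' → i' < i → i' ≤ DN i' y}

lemma Dset_subset_Aset {i : ℕ} (h5 : 5 ≤ i) : Dset i ⊆ Aset := fun y hy =>
  (mem_Aset_iff y).mpr ⟨i, h5, hy.1⟩

lemma Dset_disj {i j : ℕ} (h5 : 5 ≤ i) (hij : i < j) (y : ℕ → Bool)
    (hyi : y ∈ Dset i) (hyj : y ∈ Dset j) : False := by
  have := hyj.2 i h5 hij
  have := hyi.1
  omega

lemma Dset_five : Dset 5 = {y | DN 5 y < 5} := by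
  ext y
  simp only [Dset, Set.mem_setOf_eq]
  constructor
  · exact fun h => h.1
  · exact fun h => ⟨h, fun i' h1 h2 => by omega⟩

lemma DN_eq_of_mem_Dset {i : ℕ} (h6 : 6 ≤ i) {y : ℕ → Bool} (hy : y ∈ Dset i) :
    DN i y = i - 1 := by
  have h1 : i - 1 ≤ DN (i-1) y := hy.2 (i-1) (by omega) (by omega)
  have h2 : DN i y % 2^(i-1) = DN (i-1) y := DN_mod (by omega) y
  have h3 : i - 1 < 2^(i-1) := Nat.lt_two_pow_self
  have h4 : DN i y < i := hy.1
  have h5 : DN i y < 2^(i-1) := by omega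
  rw [Nat.mod_eq_of_lt h5] at h2
  omega

lemma Dset_eq_of_nonempty {i : ℕ} (h6 : 6 ≤ i) (hne : (Dset i).Nonempty) :
    Dset i = {y | DN i y = i - 1} := by
  obtain ⟨x₀, hx₀⟩ := hne
  have hx₀' : DN i x₀ = i - 1 := DN_eq_of_mem_Dset h6 hx₀
  ext y
  simp only [Dset, Set.mem_setOf_eq]
  constructor
  · intro hy
    exact DN_eq_of_mem_Dset h6 hy
  · intro hy
    refine ⟨by omega, fun i' h1 h2 => ?_⟩
    have hy' : DN i' y = (i-1) % 2^i' := by rw [← hy]; exact (DN_mod (by omega) y).symm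
    have hx' : DN i' x₀ = (i-1) % 2^i' := by rw [← hx₀']; exact (DN_mod (by omega) x₀).symm
    have := hx₀.2 i' h1 h2
    omega

lemma cyl_eq_DN {n j : ℕ} (hj : j < 2^n) :
    {x : ℕ → Bool | DN n x = j} = {x | ∀ i < n, x i = (fun i => j.testBit i) i} := by
  ext y
  simp only [Set.mem_setOf_eq]
  exact DN_eq_iff hj y

lemma meas_DN_eq (ν : Measure (ℕ → Bool))
    (hν : ∀ (n : ℕ) (a : ℕ → Bool), ν {x | ∀ i < n, x i = a i} = (2 : ℝ≥0∞)⁻¹ ^ n)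
    {n j : ℕ} (hj : j < 2^n) : ν {x | DN n x = j} = (2 : ℝ≥0∞)⁻¹ ^ n := by
  rw [cyl_eq_DN hj]
  exact hν n _

lemma cover_lemma {k : ℕ} (hk : 5 ≤ k) :
    Aset ⊆ (⋃ i ∈ Finset.Icc 5 k, Dset i) ∪ ⋃ (i : ℕ), {y | DN (k+1+i) y = k+i} := by
  intro y hy
  have h : ∃ i, 5 ≤ i ∧ DN i y < i := (mem_Aset_iff y).mp hy
  classical
  let i₀ := Nat.find h
  have hi₀ : 5 ≤ i₀ ∧ DN i₀ y < i₀ := Nat.find_spec h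
  have hmin : ∀ i' < i₀, ¬(5 ≤ i' ∧ DN i' y < i') := fun i' hi' => Nat.find_min h hi'
  by_cases hik : i₀ ≤ k
  · left
    refine Set.mem_biUnion (Finset.mem_Icc.mpr ⟨hi₀.1, hik⟩) ?_
    refine ⟨hi₀.2, fun i' h1 h2 => ?_⟩
    have := hmin i' h2
    omega
  · right
    push_neg at hik
    have h6 : 6 ≤ i₀ := by omega
    have hD : DN i₀ y = i₀ - 1 := by
      have h1 : ¬(5 ≤ i₀-1 ∧ DN (i₀-1) y < i₀-1) := hmin (i₀-1) (by omega)
      have h1' : i₀ - 1 ≤ DN (i₀-1) y := by omega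
      have h2 : DN i₀ y % 2^(i₀-1) = DN (i₀-1) y := DN_mod (by omega) y
      have h3 : i₀ - 1 < 2^(i₀-1) := Nat.lt_two_pow_self
      have h4 : DN i₀ y < i₀ := hi₀.2
      rw [Nat.mod_eq_of_lt (by omega)] at h2
      omega
    refine Set.mem_iUnion.mpr ⟨i₀ - (k+1), ?_⟩
    have he : k + 1 + (i₀ - (k+1)) = i₀ := by omega
    rw [he]
    simp only [Set.mem_setOf_eq]
    omega

lemma tail_meas (ν : Measure (ℕ → Bool))
    (hν : ∀ (n : ℕ) (a : ℕ → Bool), ν {x | ∀ i < n, x i = a i} = (2 : ℝ≥0∞)⁻¹ ^ n)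
    (k : ℕ) : ν (⋃ (i : ℕ), {y | DN (k+1+i) y = k+i}) ≤ (2 : ℝ≥0∞)⁻¹ ^ k := by
  refine (measure_iUnion_le _).trans ?_
  have h1 : ∀ i : ℕ, ν {y | DN (k+1+i) y = k+i} = (2 : ℝ≥0∞)⁻¹ ^ (k+1+i) := by
    intro i
    refine meas_DN_eq ν hν ?_
    have : k + i < 2^(k+i) := Nat.lt_two_pow_self
    have h2 : (2:ℕ)^(k+i) ≤ 2^(k+1+i) := Nat.pow_le_pow_right (by norm_num) (by omega)
    omega
  calc ∑' i, ν {y | DN (k+1+i) y = k+i} = ∑' i : ℕ, (2 : ℝ≥0∞)⁻¹ ^ (k+1) * (2:ℝ≥0∞)⁻¹ ^ i := by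
        refine tsum_congr fun i => ?_
        rw [h1 i, ← pow_add]
    _ = (2 : ℝ≥0∞)⁻¹ ^ (k+1) * (1 - 2⁻¹)⁻¹ := by
        rw [ENNReal.tsum_mul_left, ENNReal.tsum_geometric]
    _ ≤ (2 : ℝ≥0∞)⁻¹ ^ k := le_of_eq <| by
        rw [ENNReal.one_sub_inv_two, pow_succ, mul_assoc, inv_inv,
          ENNReal.inv_mul_cancel (by norm_num) (by norm_num), mul_one]

lemma main_meas_bound (ν : Measure (ℕ → Bool))
    (hν : ∀ (n : ℕ) (a : ℕ → Bool), ν {x | ∀ i < n, x i = a i} = (2 : ℝ≥0∞)⁻¹ ^ n)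
    {k : ℕ} (hk : 5 ≤ k) :
    ν Aset ≤ ∑ i ∈ Finset.Icc 5 k, ν (Dset i) + (2 : ℝ≥0∞)⁻¹ ^ k := by
  refine (measure_mono (cover_lemma hk)).trans ?_
  refine (measure_union_le _ _).trans ?_
  exact add_le_add (measure_biUnion_finset_le _ _) (tail_meas ν hν k)


open scoped Classical

noncomputable def Vis (x : ℕ → Bool) (d : ℕ) (S : Set (ℕ → Bool)) : ℕ :=
  ((Finset.range d).filter (fun n => Tod^[n] x ∈ S)).card

lemma Vis_DN_eq (x : ℕ → Bool) (d : ℕ) {i r : ℕ} (hr : r < 2^i) :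
    d / 2^i ≤ Vis x d {y | DN i y = r} := by
  unfold Vis
  have hcong : ∀ n ∈ Finset.range d,
      (Tod^[n] x ∈ {y | DN i y = r}) ↔ ((DN i x + n) % 2^i = r) := by
    intro n _
    rw [Set.mem_setOf_eq, DN_Tod_iter]
  refine (count_resid (DN i x) r d (Nat.two_pow_pos i) hr).trans
    (Finset.card_le_card ?_)
  intro n hn
  simp only [Finset.mem_filter] at hn ⊢
  exact ⟨hn.1, (hcong n hn.1).mpr hn.2⟩

lemma sum_Vis_le (x : ℕ → Bool) (d k : ℕ) :
    ∑ i ∈ Finset.Icc 5 k, Vis x d (Dset i) ≤ Vis x d Aset := by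
  unfold Vis
  set t : ℕ → Finset ℕ := fun i => (Finset.range d).filter (fun n => Tod^[n] x ∈ Dset i)
    with ht
  have hdisj : ∀ i ∈ Finset.Icc 5 k, ∀ j ∈ Finset.Icc 5 k, i ≠ j → Disjoint (t i) (t j) := by
    intro i hi j hj hij
    rw [Finset.disjoint_left]
    intro n hni hnj
    simp only [ht, Finset.mem_filter] at hni hnj
    rcases Nat.lt_or_ge i j with h | h
    · exact Dset_disj (Finset.mem_Icc.mp hi).1 h _ hni.2 hnj.2
    · exact Dset_disj (Finset.mem_Icc.mp hj).1 (by omega) _ hnj.2 hni.2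
  rw [← Finset.card_biUnion hdisj]
  apply Finset.card_le_card
  intro n hn
  rw [Finset.mem_biUnion] at hn
  obtain ⟨i, hi, hni⟩ := hn
  simp only [ht, Finset.mem_filter] at hni ⊢
  exact ⟨hni.1, Dset_subset_Aset (Finset.mem_Icc.mp hi).1 hni.2⟩

lemma nat_div_real (d m : ℕ) (hm : 0 < m) : (d : ℝ) / m ≤ ((d / m : ℕ) : ℝ) + 1 := by
  have h1 : m * (d / m) + d % m = d := Nat.div_add_mod d m
  have h2 : d % m < m := Nat.mod_lt _ hm
  have hmr : (0:ℝ) < (m:ℝ) := by exact_mod_cast hm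
  rw [div_le_iff₀ hmr]
  have h1' : (m:ℝ) * ((d/m : ℕ):ℝ) + ((d%m : ℕ):ℝ) = (d:ℝ) := by exact_mod_cast h1
  have h2' : ((d%m : ℕ):ℝ) < (m:ℝ) := by exact_mod_cast h2
  have h3 : (((d/m : ℕ):ℝ) + 1) * (m:ℝ) = (m:ℝ) * ((d/m : ℕ):ℝ) + m := by ring
  linarith

lemma level_bound (ν : Measure (ℕ → Bool))
    (hν : ∀ (n : ℕ) (a : ℕ → Bool), ν {x | ∀ i < n, x i = a i} = (2 : ℝ≥0∞)⁻¹ ^ n)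
    (x : ℕ → Bool) (d : ℕ) {i : ℕ} (h6 : 6 ≤ i) :
    (ν (Dset i)).toReal * d ≤ (Vis x d (Dset i) : ℝ) + 1 := by
  rcases Set.eq_empty_or_nonempty (Dset i) with he | hne
  · rw [he, measure_empty, ENNReal.toReal_zero, zero_mul]
    positivity
  · rw [Dset_eq_of_nonempty h6 hne]
    have hilt : i - 1 < 2^i := by
      have := Nat.lt_two_pow_self (n := i)
      omega
    rw [meas_DN_eq ν hν hilt]
    have htr : ((2 : ℝ≥0∞)⁻¹ ^ i).toReal = (2:ℝ)⁻¹ ^ i := by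
      rw [ENNReal.toReal_pow, ENNReal.toReal_inv]
      norm_num
    rw [htr]
    have hV : ((d / 2^i : ℕ) : ℝ) ≤ (Vis x d {y | DN i y = i - 1} : ℝ) := by
      exact_mod_cast Vis_DN_eq x d hilt
    have hd : (d : ℝ) / (2^i : ℕ) ≤ ((d / 2^i : ℕ) : ℝ) + 1 :=
      nat_div_real d (2^i) (Nat.two_pow_pos i)
    have hcast : ((2^i : ℕ) : ℝ) = 2^i := by push_cast; ring
    rw [hcast] at hd
    have : (2:ℝ)⁻¹ ^ i * d = (d:ℝ) / 2^i := by
      rw [inv_pow]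
      ring
    rw [this]
    linarith

lemma level5_bound (ν : Measure (ℕ → Bool))
    (hν : ∀ (n : ℕ) (a : ℕ → Bool), ν {x | ∀ i < n, x i = a i} = (2 : ℝ≥0∞)⁻¹ ^ n)
    (x : ℕ → Bool) (d : ℕ) :
    (ν (Dset 5)).toReal * d ≤ (Vis x d (Dset 5) : ℝ) + 5 := by
  have hm : ν (Dset 5) ≤ 5 * (2 : ℝ≥0∞)⁻¹ ^ 5 := by
    rw [Dset_five]
    have hcov : {y : ℕ → Bool | DN 5 y < 5} = ⋃ j ∈ Finset.range 5, {y | DN 5 y = j} := by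
      ext y
      simp only [Set.mem_setOf_eq, Set.mem_iUnion, Finset.mem_range]
      constructor
      · exact fun h => ⟨DN 5 y, h, rfl⟩
      · rintro ⟨j, hj, h⟩; omega
    rw [hcov]
    refine (measure_biUnion_finset_le _ _).trans ?_
    have : ∀ j ∈ Finset.range 5, ν {y | DN 5 y = j} = (2 : ℝ≥0∞)⁻¹ ^ 5 := by
      intro j hj
      exact meas_DN_eq ν hν (by simp only [Finset.mem_range] at hj; omega)
    rw [Finset.sum_congr rfl this]
    simp [Finset.sum_const]
  have hmr : (ν (Dset 5)).toReal ≤ 5 / 32 := by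
    have h1 : (ν (Dset 5)).toReal ≤ ((5 : ℝ≥0∞) * 2⁻¹ ^ 5).toReal := by
      apply ENNReal.toReal_mono _ hm
      refine ENNReal.mul_ne_top (by norm_num) ?_
      exact ENNReal.pow_ne_top (by norm_num)
    refine h1.trans (le_of_eq ?_)
    rw [ENNReal.toReal_mul, ENNReal.toReal_pow, ENNReal.toReal_inv]
    norm_num
  -- visits lower bound
  have hVsum : ∑ j ∈ Finset.range 5, Vis x d {y | DN 5 y = j} ≤ Vis x d (Dset 5) := by
    unfold Vis
    rw [Dset_five]
    have hdisj : ∀ i ∈ Finset.range 5, ∀ j ∈ Finset.range 5, i ≠ j →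
        Disjoint (@Finset.filter _ (fun n => Tod^[n] x ∈ {y | DN 5 y = i})
            (fun n => Classical.propDecidable _) (Finset.range d))
          (@Finset.filter _ (fun n => Tod^[n] x ∈ {y | DN 5 y = j})
            (fun n => Classical.propDecidable _) (Finset.range d)) := by
      intro i _ j _ hij
      rw [Finset.disjoint_left]
      intro n hni hnj
      simp only [Finset.mem_filter, Set.mem_setOf_eq] at hni hnj
      omega
    refine le_trans (le_of_eq (Finset.card_biUnion hdisj).symm) (Finset.card_le_card ?_)
    intro n hn
    rw [Finset.mem_biUnion] at hn
    obtain ⟨j, hj, hnj⟩ := hn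
    simp only [Finset.mem_filter, Set.mem_setOf_eq] at hnj ⊢
    refine ⟨hnj.1, ?_⟩
    simp only [Finset.mem_range] at hj
    omega
  have hVj : ∀ j ∈ Finset.range 5, d / 32 ≤ Vis x d {y | DN 5 y = j} := by
    intro j hj
    simp only [Finset.mem_range] at hj
    have := Vis_DN_eq x d (i := 5) (r := j) (by norm_num; omega)
    simpa using this
  have hV : 5 * (d / 32 : ℕ) ≤ Vis x d (Dset 5) := by
    calc 5 * (d / 32) = ∑ _j ∈ Finset.range 5, (d / 32) := by
          rw [Finset.sum_const, Finset.card_range]; ring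
      _ ≤ ∑ j ∈ Finset.range 5, Vis x d {y | DN 5 y = j} := Finset.sum_le_sum hVj
      _ ≤ Vis x d (Dset 5) := hVsum
  have hdd : (d : ℝ) / 32 ≤ ((d / 32 : ℕ) : ℝ) + 1 := by
    have := nat_div_real d 32 (by norm_num)
    simpa using this
  have hVr : (5:ℝ) * ((d / 32 : ℕ) : ℝ) ≤ (Vis x d (Dset 5) : ℝ) := by exact_mod_cast hV
  have hdr : (0:ℝ) ≤ d := Nat.cast_nonneg d
  calc (ν (Dset 5)).toReal * d ≤ (5/32) * d := by
        apply mul_le_mul_of_nonneg_right hmr hdr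
    _ ≤ (Vis x d (Dset 5) : ℝ) + 5 := by linarith


lemma nu_univ (ν : Measure (ℕ → Bool))
    (hν : ∀ (n : ℕ) (a : ℕ → Bool), ν {x | ∀ i < n, x i = a i} = (2 : ℝ≥0∞)⁻¹ ^ n) :
    ν Set.univ = 1 := by
  have h := hν 0 (fun _ => false)
  have he : {x : ℕ → Bool | ∀ i < 0, x i = false} = Set.univ := by
    ext y; simp
  rw [he] at h
  simpa using h

lemma nu_ne_top (ν : Measure (ℕ → Bool))
    (hν : ∀ (n : ℕ) (a : ℕ → Bool), ν {x | ∀ i < n, x i = a i} = (2 : ℝ≥0∞)⁻¹ ^ n)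
    (S : Set (ℕ → Bool)) : ν S ≠ ⊤ := by
  have h1 : ν S ≤ 1 := by
    rw [← nu_univ ν hν]
    exact measure_mono (Set.subset_univ S)
  exact ne_top_of_le_ne_top (by norm_num) h1

lemma meas_D5 (ν : Measure (ℕ → Bool))
    (hν : ∀ (n : ℕ) (a : ℕ → Bool), ν {x | ∀ i < n, x i = a i} = (2 : ℝ≥0∞)⁻¹ ^ n) :
    (ν (Dset 5)).toReal ≤ 5 / 32 := by
  have hm : ν (Dset 5) ≤ 5 * (2 : ℝ≥0∞)⁻¹ ^ 5 := by
    rw [Dset_five]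
    have hcov : {y : ℕ → Bool | DN 5 y < 5} = ⋃ j ∈ Finset.range 5, {y | DN 5 y = j} := by
      ext y
      simp only [Set.mem_setOf_eq, Set.mem_iUnion, Finset.mem_range]
      constructor
      · exact fun h => ⟨DN 5 y, h, rfl⟩
      · rintro ⟨j, hj, h⟩; omega
    rw [hcov]
    refine (measure_biUnion_finset_le _ _).trans ?_
    have h5 : ∀ j ∈ Finset.range 5, ν {y | DN 5 y = j} = (2 : ℝ≥0∞)⁻¹ ^ 5 := by
      intro j hj
      exact meas_DN_eq ν hν (by simp only [Finset.mem_range] at hj; omega)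
    rw [Finset.sum_congr rfl h5]
    simp [Finset.sum_const]
  have h1 : (ν (Dset 5)).toReal ≤ ((5 : ℝ≥0∞) * 2⁻¹ ^ 5).toReal := by
    apply ENNReal.toReal_mono _ hm
    exact ENNReal.mul_ne_top (by norm_num) (ENNReal.pow_ne_top (by norm_num))
  refine h1.trans (le_of_eq ?_)
  rw [ENNReal.toReal_mul, ENNReal.toReal_pow, ENNReal.toReal_inv]
  norm_num

lemma main_real_bound (ν : Measure (ℕ → Bool))
    (hν : ∀ (n : ℕ) (a : ℕ → Bool), ν {x | ∀ i < n, x i = a i} = (2 : ℝ≥0∞)⁻¹ ^ n)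
    {k : ℕ} (hk : 5 ≤ k) :
    (ν Aset).toReal ≤ ∑ i ∈ Finset.Icc 5 k, (ν (Dset i)).toReal + (2:ℝ)⁻¹ ^ k := by
  have h := main_meas_bound ν hν hk
  have hsne : ∑ i ∈ Finset.Icc 5 k, ν (Dset i) ≠ ⊤ := by
    refine (ENNReal.sum_lt_top.mpr ?_).ne
    intro i _
    exact (nu_ne_top ν hν (Dset i)).lt_top
  have hpne : ((2 : ℝ≥0∞)⁻¹ ^ k) ≠ ⊤ := ENNReal.pow_ne_top (by norm_num)
  have h2 := ENNReal.toReal_mono (by exact ENNReal.add_ne_top.mpr ⟨hsne, hpne⟩) h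
  rw [ENNReal.toReal_add hsne hpne,
    ENNReal.toReal_sum (fun i _ => nu_ne_top ν hν (Dset i))] at h2
  have h3 : ((2 : ℝ≥0∞)⁻¹ ^ k).toReal = (2:ℝ)⁻¹ ^ k := by
    rw [ENNReal.toReal_pow, ENNReal.toReal_inv]
    norm_num
  rwa [h3] at h2

lemma shiftZ_iter (i : ℕ) (z : ℤ → Bool) (n : ℤ) : shiftZ^[i] z n = z (n + i) := by
  induction i generalizing z with
  | zero => simp
  | succ i ih =>
    rw [Function.iterate_succ_apply, ih (shiftZ z)]
    show z (n + ↑i + 1) = z (n + ↑(i+1))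
    congr 1
    push_cast
    ring

lemma sum_psi0 (x : ℕ → Bool) (d : ℕ) :
    ∑ i ∈ Finset.range d, psi0 (shiftZ^[i] (Phi x)) = -2 * (Vis x d Aset : ℝ) := by
  have hterm : ∀ i : ℕ, psi0 (shiftZ^[i] (Phi x)) = if Tod^[i] x ∈ Aset then (-2:ℝ) else 0 := by
    intro i
    have h0 : shiftZ^[i] (Phi x) 0 = Phi x i := by rw [shiftZ_iter]; norm_num
    have hz : zIter (i : ℤ) x = Tod^[i] x := by
      rw [zIter, if_pos (Int.natCast_nonneg i)]
      simp
    rw [psi0, h0]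
    show (if Phi x i = true then (-2:ℝ) else 0) = _
    rw [Phi]
    simp only [hz]
    by_cases hA : Tod^[i] x ∈ Aset
    · rw [if_pos (decide_eq_true hA), if_pos hA]
    · rw [if_neg (fun hc => hA (of_decide_eq_true hc)), if_neg hA]
  rw [Finset.sum_congr rfl (fun i _ => hterm i)]
  have h2 : ∀ i : ℕ, (if Tod^[i] x ∈ Aset then (-2:ℝ) else 0)
      = -2 * (if Tod^[i] x ∈ Aset then (1:ℝ) else 0) := by
    intro i; split <;> ring
  rw [Finset.sum_congr rfl (fun i _ => h2 i), ← Finset.mul_sum, Finset.sum_boole]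
  rfl

lemma logb_ge (n d : ℕ) (h : 2^n ≤ d) : (n:ℝ) ≤ Real.logb 2 d := by
  have hd : (0:ℝ) < d := by
    have : 0 < d := lt_of_lt_of_le (Nat.two_pow_pos n) h
    exact_mod_cast this
  have h1 : ((2:ℝ))^n ≤ (d:ℝ) := by exact_mod_cast h
  have h2 : Real.log ((2:ℝ)^n) ≤ Real.log d := Real.log_le_log (by positivity) h1
  rw [Real.log_pow] at h2
  rw [Real.logb, le_div_iff₀ (Real.log_pos (by norm_num))]
  exact_mod_cast h2

end S17

/-- for `y = Φ(x)` and every `d ∈ ℕ`,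
`S_d ψ_0(y) ≤ −2 ν(A) d + 4 + 2 log₂ d`. -/
theorem stmt17 (ν : Measure (ℕ → Bool))
    (hν : ∀ (n : ℕ) (a : ℕ → Bool), ν {x | ∀ i < n, x i = a i} = (2 : ℝ≥0∞)⁻¹ ^ n)
    (x : ℕ → Bool) (d : ℕ) :
    ∑ i ∈ Finset.range d, psi0 (shiftZ^[i] (Phi x)) ≤
      -2 * (ν Aset).toReal * d + 4 + 2 * Real.logb 2 d := by
  rw [S17.sum_psi0 x d]
  rcases Nat.eq_zero_or_pos d with hd0 | hd1
  · subst hd0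
    have hV : S17.Vis x 0 Aset = 0 := by simp [S17.Vis]
    rw [hV]
    simp [Real.logb_zero]
  · have key : (ν Aset).toReal * d ≤ (S17.Vis x d Aset : ℝ) + 2 + Real.logb 2 d := by
      rcases le_or_gt d 31 with hsmall | hbig
      · -- small d
        have h316 : (ν Aset).toReal ≤ 3/16 := by
          have h := S17.main_real_bound ν hν (le_refl 5)
          rw [Finset.Icc_self, Finset.sum_singleton] at h
          have h5 := S17.meas_D5 ν hν
          norm_num at h ⊢
          linarith
        have hVn : (0:ℝ) ≤ (S17.Vis x d Aset : ℝ) := Nat.cast_nonneg _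
        have hdr1 : (1:ℝ) ≤ d := by exact_mod_cast hd1
        have hlog : (3/16 : ℝ) * d ≤ 2 + Real.logb 2 d := by
          rcases le_or_gt d 10 with h10 | h10
          · have hd10 : (d:ℝ) ≤ 10 := by exact_mod_cast h10
            have hl0 : 0 ≤ Real.logb 2 d := Real.logb_nonneg (by norm_num) hdr1
            linarith
          · rcases le_or_gt d 21 with h21 | h21
            · have hd21 : (d:ℝ) ≤ 21 := by exact_mod_cast h21
              have hl3 : ((3:ℕ):ℝ) ≤ Real.logb 2 d := S17.logb_ge 3 d (by norm_num; omega)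
              norm_num at hl3
              linarith
            · have hd31 : (d:ℝ) ≤ 31 := by exact_mod_cast hsmall
              have hl4 : ((4:ℕ):ℝ) ≤ Real.logb 2 d := S17.logb_ge 4 d (by norm_num; omega)
              norm_num at hl4
              linarith
        calc (ν Aset).toReal * d ≤ (3/16) * d :=
              mul_le_mul_of_nonneg_right h316 (by positivity)
          _ ≤ 2 + Real.logb 2 d := hlog
          _ ≤ (S17.Vis x d Aset : ℝ) + 2 + Real.logb 2 d := by linarith
      · -- big d : 32 ≤ d
        set k := Nat.log 2 d with hkdef
        have h32 : 2^5 ≤ d := by norm_num; omega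
        have hk5 : 5 ≤ k := (Nat.le_log_iff_pow_le (by norm_num) (by omega)).mpr h32
        have h2k : 2^k ≤ d := Nat.pow_log_le_self 2 (by omega)
        have hdk : d < 2^(k+1) := Nat.lt_pow_succ_log_self (by norm_num) d
        have hlogk : (k:ℝ) ≤ Real.logb 2 d := S17.logb_ge k d h2k
        have hmain := S17.main_real_bound ν hν hk5
        have hlev : ∀ i ∈ Finset.Icc 5 k, (ν (S17.Dset i)).toReal * d
            ≤ (S17.Vis x d (S17.Dset i) : ℝ) + (if i = 5 then 5 else 1) := by
          intro i hi
          rcases eq_or_ne i 5 with h5 | h5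
          · subst h5
            simpa using S17.level5_bound ν hν x d
          · have h6 : 6 ≤ i := by
              have := (Finset.mem_Icc.mp hi).1
              omega
            simpa [h5] using S17.level_bound ν hν x d h6
        have hsumV : ((∑ i ∈ Finset.Icc 5 k, S17.Vis x d (S17.Dset i) : ℕ) : ℝ)
            ≤ (S17.Vis x d Aset : ℝ) := by exact_mod_cast S17.sum_Vis_le x d k
        have htail : (2:ℝ)⁻¹ ^ k * d ≤ 2 := by
          have hdr : (d:ℝ) < 2^(k+1) := by exact_mod_cast hdk
          have hp : (0:ℝ) < 2^k := by positivity
          rw [inv_pow, inv_mul_le_iff₀ hp]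
          rw [pow_succ] at hdr
          linarith
        have hite : ∑ i ∈ Finset.Icc 5 k, (if i = 5 then (5:ℝ) else 1) = k := by
          have hsplit : ∀ i : ℕ, (if i = 5 then (5:ℝ) else 1) = 1 + (if i = 5 then (4:ℝ) else 0) := by
            intro i; split <;> norm_num
          rw [Finset.sum_congr rfl fun i _ => hsplit i, Finset.sum_add_distrib, Finset.sum_const,
            Finset.sum_ite_eq' (Finset.Icc 5 k) 5 (fun _ => (4:ℝ)),
            if_pos (Finset.mem_Icc.mpr ⟨le_refl 5, hk5⟩), Nat.card_Icc, nsmul_eq_mul, mul_one]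
          have hc : ((k + 1 - 5 : ℕ) : ℝ) = (k:ℝ) - 4 := by
            have h' : k + 1 - 5 = k - 4 := by omega
            rw [h', Nat.cast_sub (by omega)]
            norm_num
          rw [hc]
          ring
        calc (ν Aset).toReal * d
            ≤ (∑ i ∈ Finset.Icc 5 k, (ν (S17.Dset i)).toReal + (2:ℝ)⁻¹ ^ k) * d :=
              mul_le_mul_of_nonneg_right hmain (by positivity)
          _ = ∑ i ∈ Finset.Icc 5 k, (ν (S17.Dset i)).toReal * d + (2:ℝ)⁻¹ ^ k * d := by
              rw [add_mul, Finset.sum_mul]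
          _ ≤ (∑ i ∈ Finset.Icc 5 k, ((S17.Vis x d (S17.Dset i) : ℝ) + (if i = 5 then 5 else 1))) + 2 :=
              add_le_add (Finset.sum_le_sum hlev) htail
          _ = (∑ i ∈ Finset.Icc 5 k, (S17.Vis x d (S17.Dset i) : ℝ)) + (k:ℝ) + 2 := by
              rw [Finset.sum_add_distrib, hite]
          _ ≤ (S17.Vis x d Aset : ℝ) + (k:ℝ) + 2 := by
              have hcast : (∑ i ∈ Finset.Icc 5 k, (S17.Vis x d (S17.Dset i) : ℝ))
                  = ((∑ i ∈ Finset.Icc 5 k, S17.Vis x d (S17.Dset i) : ℕ) : ℝ) := by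
                push_cast
                rfl
              rw [hcast]
              linarith
          _ ≤ (S17.Vis x d Aset : ℝ) + 2 + Real.logb 2 d := by linarith
    linarith
end
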